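/- arXiv:1707.05734 — 5 statements merged into one kernel-verified Lean document; each statement's English description precedes it below -/
import Mathlib

section
/- Define the sesquilinear form b : dom(G) × dom(G) → ℂ by b(u,v) = (aGu, Gv)_{H₁} + (mu, v)_{H₀} and define j : dom(G) → H by j = κ ∘ π_{BD(G)}. Then b is continuous and coercive on dom(G) (there is μ > 0 with Re b(u,u) ≥ μ‖u‖²_{dom(G)} for all u ∈ dom(G)), and the Dirichlet-to-Neumann operator Λ_H in H associated with −DaG + m satisfies: for all φ, ψ ∈ H one has φ ∈ dom(Λ_H) and Λ_H φ = ψ if and only if there exists u ∈ dom(G) with j(u) = φ and b(u,v) = (ψ, j(v))_H for all v ∈ dom(G). -/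
open Filter Topology

noncomputable section

namespace DtNPaper

local notation "⟪" x ", " y "⟫" => (inner ℂ x y : ℂ)

/-- Membership in the abstract boundary data space `BD(T)`: `u ∈ dom T`
(with `p = T u`, i.e. `(u, p)` in the graph of `T`) and `u` is orthogonal to
`dom T̊` with respect to the graph inner product of `dom T`. -/
def memBD {E F : Type*} [NormedAddCommGroup E] [InnerProductSpace ℂ E]
    [NormedAddCommGroup F] [InnerProductSpace ℂ F]
    (T Ti : E →ₗ.[ℂ] F) (u : E) : Prop :=
  ∃ p : F, (u, p) ∈ T.graph ∧ ∀ v w, (v, w) ∈ Ti.graph → ⟪v, u⟫ + ⟪w, p⟫ = 0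

/-- A bounded operator `M` is coercive if `Re (M x, x) ≥ μ ‖x‖²` for some `μ > 0`. -/
def Coercive {E : Type*} [NormedAddCommGroup E] [InnerProductSpace ℂ E]
    (M : E →L[ℂ] E) : Prop :=
  ∃ μ : ℝ, 0 < μ ∧ ∀ x : E, μ * ‖x‖ ^ 2 ≤ (⟪x, M x⟫).re

/-- Sequential formulation of compactness of the inclusion of `dom T`
(graph norm) into `E`. -/
def CompactIncl {E F : Type*} [NormedAddCommGroup E] [InnerProductSpace ℂ E]
    [NormedAddCommGroup F] [InnerProductSpace ℂ F] (T : E →ₗ.[ℂ] F) : Prop :=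
  ∀ (u : ℕ → E) (p : ℕ → F), (∀ n, (u n, p n) ∈ T.graph) →
    (∃ C : ℝ, ∀ n, ‖u n‖ ^ 2 + ‖p n‖ ^ 2 ≤ C) →
    ∃ φ : ℕ → ℕ, StrictMono φ ∧ ∃ x : E, Tendsto (fun j => u (φ j)) atTop (𝓝 x)

/-- The range of a partially defined linear operator, as a set. -/
def ranSet {E F : Type*} [NormedAddCommGroup E] [InnerProductSpace ℂ E]
    [NormedAddCommGroup F] [InnerProductSpace ℂ F] (T : E →ₗ.[ℂ] F) : Set F :=
  {p | ∃ u, (u, p) ∈ T.graph}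

/-- The Dirichlet-to-Neumann graph associated with `-D a G + m`:
the set of pairs `(π_{BD(G)} u, π_{BD(D)} (a G u))` where `u ∈ dom (D a G)` and
`m u - D a G u = 0`.  The orthogonal projections onto the boundary data spaces
are characterised by membership in `BD` together with the difference lying in
the domain of the corresponding minimal operator. -/
def dtnGraph {E F : Type*} [NormedAddCommGroup E] [InnerProductSpace ℂ E]
    [NormedAddCommGroup F] [InnerProductSpace ℂ F]
    (G Gi : E →ₗ.[ℂ] F) (D Di : F →ₗ.[ℂ] E)
    (a : F →L[ℂ] F) (m : E →L[ℂ] E) : Set (E × F) :=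
  {z | ∃ u p, (u, p) ∈ G.graph ∧ (a p, m u) ∈ D.graph ∧
    memBD G Gi z.1 ∧ u - z.1 ∈ Gi.domain ∧
    memBD D Di z.2 ∧ a p - z.2 ∈ Di.domain}

/-- The Dirichlet-to-Neumann graph in `H`: `(φ, ψ)` belongs to it if there is
`u₀ ∈ BD(G)` with `κ u₀ = φ` and `Λ u₀ = G (κ* ψ)`; here `k` is `κ` and
`kstarG` is the map `ψ ↦ G (κ* ψ)`. -/
def dtnGraphH {E F HS : Type*} [NormedAddCommGroup E] [InnerProductSpace ℂ E]
    [NormedAddCommGroup F] [InnerProductSpace ℂ F]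
    [NormedAddCommGroup HS] [InnerProductSpace ℂ HS]
    (G Gi : E →ₗ.[ℂ] F) (D Di : F →ₗ.[ℂ] E)
    (a : F →L[ℂ] F) (m : E →L[ℂ] E)
    (k : E → HS) (kstarG : HS → F) : Set (HS × HS) :=
  {z | ∃ u₀ : E, memBD G Gi u₀ ∧ k u₀ = z.1 ∧
    (u₀, kstarG z.2) ∈ dtnGraph G Gi D Di a m}

variable {H₀ H₁ HS : Type*}
  [NormedAddCommGroup H₀] [InnerProductSpace ℂ H₀] [CompleteSpace H₀]
  [NormedAddCommGroup H₁] [InnerProductSpace ℂ H₁] [CompleteSpace H₁]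


set_option maxHeartbeats 1000000 in
set_option synthInstance.maxHeartbeats 400000 in
private theorem graph_fst_mem' {E F : Type*} [NormedAddCommGroup E] [InnerProductSpace ℂ E]
    [NormedAddCommGroup F] [InnerProductSpace ℂ F] (T : E →ₗ.[ℂ] F) {x : E} {y : F}
    (h : (x, y) ∈ T.graph) : x ∈ T.domain := by
  rcases (T.mem_graph_iff).1 h with ⟨z, hz, _⟩
  show (x, y).1 ∈ T.domain
  exact hz ▸ z.2

private theorem graph_snd_unique' {E F : Type*} [NormedAddCommGroup E] [InnerProductSpace ℂ E]
    [NormedAddCommGroup F] [InnerProductSpace ℂ F] (T : E →ₗ.[ℂ] F) {x : E} {y₁ y₂ : F}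
    (h1 : (x, y₁) ∈ T.graph) (h2 : (x, y₂) ∈ T.graph) : y₁ = y₂ := by
  rcases (T.mem_graph_iff).1 h1 with ⟨a, ha, ha'⟩
  rcases (T.mem_graph_iff).1 h2 with ⟨b, hb, hb'⟩
  have : a = b := Subtype.ext (ha.trans hb.symm)
  show (x, y₁).2 = (x, y₂).2
  rw [← ha', ← hb', this]

private theorem memBD_zero' {E F : Type*} [NormedAddCommGroup E] [InnerProductSpace ℂ E]
    [NormedAddCommGroup F] [InnerProductSpace ℂ F] (T Ti : E →ₗ.[ℂ] F) : memBD T Ti 0 :=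
  ⟨0, T.graph.zero_mem, fun v w _ => by simp⟩

set_option maxHeartbeats 1000000 in
set_option synthInstance.maxHeartbeats 400000 in
private theorem mem_D_of_perp' {E F : Type*} [NormedAddCommGroup E] [InnerProductSpace ℂ E]
    [CompleteSpace E] [NormedAddCommGroup F] [InnerProductSpace ℂ F] [CompleteSpace F]
    {Gi : E →ₗ.[ℂ] F} {D : F →ₗ.[ℂ] E}
    (hDclosed : IsClosed (D.graph : Set (F × E)))
    (hGi : ∀ u w, (u, w) ∈ Gi.graph ↔ ∀ q s, (q, s) ∈ D.graph → ⟪w, q⟫ = -⟪u, s⟫)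
    {x : E} {p : F}
    (hperp : ∀ v w, (v, w) ∈ Gi.graph → ⟪v, x⟫ + ⟪w, p⟫ = 0) :
    (p, x) ∈ D.graph := by
  let f : WithLp 2 (E × F) →ₗ[ℂ] F × E :=
    (LinearEquiv.prodComm ℂ E F).toLinearMap ∘ₗ
      (WithLp.linearEquiv 2 ℂ (E × F)).toLinearMap
  let S : Submodule ℂ (WithLp 2 (E × F)) := D.graph.comap f
  have hSclosed : IsClosed (S : Set (WithLp 2 (E × F))) := by
    have hc := (WithLp.prodContinuousLinearEquiv 2 ℂ E F).continuous
    have : IsClosed ((fun z : WithLp 2 (E × F) =>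
        (((WithLp.prodContinuousLinearEquiv 2 ℂ E F) z).2,
         ((WithLp.prodContinuousLinearEquiv 2 ℂ E F) z).1)) ⁻¹'
        (D.graph : Set (F × E))) :=
      hDclosed.preimage ((continuous_snd.comp hc).prodMk (continuous_fst.comp hc))
    exact this
  have horth : ∀ z : WithLp 2 (E × F), z ∈ Sᗮ → (z.fst, z.snd) ∈ Gi.graph := by
    intro z hz
    rw [Submodule.mem_orthogonal] at hz
    rw [hGi]
    intro q s hqs
    have hu : ((WithLp.equiv 2 (E × F)).symm ((s, q) : E × F)) ∈ S := hqs
    have h0 := hz _ hu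
    rw [WithLp.prod_inner_apply] at h0
    simp only [WithLp.equiv_symm_apply, WithLp.ofLp_toLp, WithLp.ofLp_fst, WithLp.ofLp_snd, WithLp.toLp_fst, WithLp.toLp_snd] at h0
    have h1 := congrArg (starRingEnd ℂ) h0
    simp only [map_add, inner_conj_symm, map_zero] at h1
    linear_combination h1
  have hxp : ((WithLp.equiv 2 (E × F)).symm ((x, p) : E × F)) ∈ Sᗮᗮ := by
    rw [Submodule.mem_orthogonal]
    intro z hz
    have h0 := hperp z.fst z.snd (horth z hz)
    rw [WithLp.prod_inner_apply]
    simp only [WithLp.equiv_symm_apply, WithLp.ofLp_toLp, WithLp.ofLp_fst, WithLp.ofLp_snd, WithLp.toLp_fst, WithLp.toLp_snd]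
    exact h0
  rw [Submodule.orthogonal_orthogonal_eq_closure,
    hSclosed.submodule_topologicalClosure_eq] at hxp
  exact hxp

set_option maxHeartbeats 1000000 in
set_option synthInstance.maxHeartbeats 400000 in
private theorem exists_bd_decomp' {E F : Type*} [NormedAddCommGroup E] [InnerProductSpace ℂ E]
    [CompleteSpace E] [NormedAddCommGroup F] [InnerProductSpace ℂ F] [CompleteSpace F]
    {G Gi : E →ₗ.[ℂ] F} {D : F →ₗ.[ℂ] E}
    (hGi : ∀ u w, (u, w) ∈ Gi.graph ↔ ∀ q s, (q, s) ∈ D.graph → ⟪w, q⟫ = -⟪u, s⟫)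
    (hGiG : Gi.graph ≤ G.graph)
    {v : E} {s : F} (hvs : (v, s) ∈ G.graph) :
    ∃ v₀ s₀, (v₀, s₀) ∈ G.graph ∧ memBD G Gi v₀ ∧ (v - v₀, s - s₀) ∈ Gi.graph := by
  let f : WithLp 2 (E × F) →ₗ[ℂ] F × E :=
    (LinearEquiv.prodComm ℂ E F).toLinearMap ∘ₗ
      (WithLp.linearEquiv 2 ℂ (E × F)).toLinearMap
  let S : Submodule ℂ (WithLp 2 (E × F)) := D.graph.comap f
  have hKmem : ∀ z : WithLp 2 (E × F), z ∈ Sᗮ ↔ (z.fst, z.snd) ∈ Gi.graph := by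
    intro z
    constructor
    · intro hz
      rw [Submodule.mem_orthogonal] at hz
      rw [hGi]
      intro q s' hqs
      have hu : ((WithLp.equiv 2 (E × F)).symm ((s', q) : E × F)) ∈ S := hqs
      have h0 := hz _ hu
      rw [WithLp.prod_inner_apply] at h0
      simp only [WithLp.equiv_symm_apply, WithLp.ofLp_toLp, WithLp.ofLp_fst, WithLp.ofLp_snd, WithLp.toLp_fst, WithLp.toLp_snd] at h0
      have h1 := congrArg (starRingEnd ℂ) h0
      simp only [map_add, inner_conj_symm, map_zero] at h1
      linear_combination h1
    · intro hz
      rw [Submodule.mem_orthogonal]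
      intro u hu
      have h := (hGi _ _).1 hz u.snd u.fst hu
      rw [WithLp.prod_inner_apply, WithLp.ofLp_fst, WithLp.ofLp_snd]
      simp only [WithLp.ofLp_fst, WithLp.ofLp_snd]
      have h1 := congrArg (starRingEnd ℂ) h
      simp only [inner_conj_symm, map_neg] at h1
      linear_combination h1
  haveI hcs : CompleteSpace (Sᗮ : Submodule ℂ (WithLp 2 (E × F))) :=
    (Submodule.isClosed_orthogonal S).completeSpace_coe
  haveI : (Sᗮ : Submodule ℂ (WithLp 2 (E × F))).HasOrthogonalProjection :=
    Submodule.HasOrthogonalProjection.ofCompleteSpace _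
  obtain ⟨y, hy, z, hz, hsum⟩ :=
    (Sᗮ).exists_add_mem_mem_orthogonal ((WithLp.equiv 2 (E × F)).symm ((v, s) : E × F))
  have hyGi : (y.fst, y.snd) ∈ Gi.graph := (hKmem y).1 hy
  have hfst : v = y.fst + z.fst := by
    have := congrArg (fun w : WithLp 2 (E × F) => w.fst) hsum
    simpa [WithLp.add_fst, WithLp.equiv_symm_apply, WithLp.ofLp_toLp, WithLp.ofLp_fst, WithLp.ofLp_snd, WithLp.toLp_fst, WithLp.toLp_snd] using this
  have hsnd : s = y.snd + z.snd := by
    have := congrArg (fun w : WithLp 2 (E × F) => w.snd) hsum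
    simpa [WithLp.add_snd, WithLp.equiv_symm_apply, WithLp.ofLp_toLp, WithLp.ofLp_fst, WithLp.ofLp_snd, WithLp.toLp_fst, WithLp.toLp_snd] using this
  have hzG : (z.fst, z.snd) ∈ G.graph := by
    have hsub := G.graph.sub_mem hvs (hGiG hyGi)
    have he : ((v, s) : E × F) - (y.fst, y.snd) = (z.fst, z.snd) := by
      rw [Prod.mk_sub_mk]
      exact Prod.ext (by rw [hfst, add_sub_cancel_left]) (by rw [hsnd, add_sub_cancel_left])
    rwa [he] at hsub
  refine ⟨z.fst, z.snd, hzG, ⟨z.snd, hzG, ?_⟩, ?_⟩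
  · intro vv ww hvw
    rw [Submodule.mem_orthogonal] at hz
    have hu : ((WithLp.equiv 2 (E × F)).symm ((vv, ww) : E × F)) ∈ Sᗮ := by
      rw [hKmem]
      simpa [WithLp.equiv_symm_apply, WithLp.ofLp_toLp, WithLp.ofLp_fst, WithLp.ofLp_snd, WithLp.toLp_fst, WithLp.toLp_snd] using hvw
    have h0 := hz _ hu
    rw [WithLp.prod_inner_apply] at h0
    simpa [WithLp.equiv_symm_apply, WithLp.ofLp_toLp, WithLp.ofLp_fst, WithLp.ofLp_snd, WithLp.toLp_fst, WithLp.toLp_snd] using h0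
  · have he1 : v - z.fst = y.fst := by rw [hfst, add_sub_cancel_right]
    have he2 : s - z.snd = y.snd := by rw [hsnd, add_sub_cancel_right]
    rw [he1, he2]
    exact hyGi

set_option maxHeartbeats 1000000
set_option synthInstance.maxHeartbeats 400000

/-- Proposition 3.5: the form `b(u,v) = (a G u, G v)_{H₁} + (m u, v)_{H₀}` is
continuous and coercive on `dom G`, and the Dirichlet-to-Neumann operator
`Λ_H` in `H` associated with `-D a G + m` is the operator associated with
`(b, j)`, where `j = κ ∘ π_{BD(G)}`. -/
theorem statement8
    (G Gi : H₀ →ₗ.[ℂ] H₁) (D Di : H₁ →ₗ.[ℂ] H₀)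
    (hGdense : Dense (G.domain : Set H₀)) (hDdense : Dense (D.domain : Set H₁))
    (hGclosed : IsClosed (G.graph : Set (H₀ × H₁)))
    (hDclosed : IsClosed (D.graph : Set (H₁ × H₀)))
    (hGi : ∀ u w, (u, w) ∈ Gi.graph ↔ ∀ q s, (q, s) ∈ D.graph → ⟪w, q⟫ = -⟪u, s⟫)
    (hDi : ∀ q w, (q, w) ∈ Di.graph ↔ ∀ u p, (u, p) ∈ G.graph → ⟪w, u⟫ = -⟪q, p⟫)
    (hGiG : Gi.graph ≤ G.graph) (hDiD : Di.graph ≤ D.graph)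
    [NormedAddCommGroup HS] [InnerProductSpace ℂ HS] [CompleteSpace HS]
    (k : H₀ → HS) (kstar : HS → H₀) (kstarG : HS → H₁)
    (hk_add : ∀ u v, memBD G Gi u → memBD G Gi v → k (u + v) = k u + k v)
    (hk_smul : ∀ (c : ℂ) u, memBD G Gi u → k (c • u) = c • k u)
    (hk_bdd : ∃ C : ℝ, ∀ u p, (u, p) ∈ G.graph → memBD G Gi u →
      ‖k u‖ ≤ C * Real.sqrt (‖u‖ ^ 2 + ‖p‖ ^ 2))
    (hk_inj : ∀ u, memBD G Gi u → k u = 0 → u = 0)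
    (hk_dense : Dense (k '' {u | memBD G Gi u}))
    (hkstar_mem : ∀ ψ : HS, (kstar ψ, kstarG ψ) ∈ G.graph ∧ memBD G Gi (kstar ψ))
    (hkstar_adj : ∀ u p (ψ : HS), (u, p) ∈ G.graph → memBD G Gi u →
      ⟪k u, ψ⟫ = ⟪u, kstar ψ⟫ + ⟪p, kstarG ψ⟫)
    (a : H₁ →L[ℂ] H₁) (m : H₀ →L[ℂ] H₀)
    (ha : Coercive a) (hm : Coercive m) :
    -- b is continuous
    (∃ C : ℝ, ∀ u p v s, (u, p) ∈ G.graph → (v, s) ∈ G.graph →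
      ‖⟪s, a p⟫ + ⟪v, m u⟫‖ ≤
        C * Real.sqrt (‖u‖ ^ 2 + ‖p‖ ^ 2) * Real.sqrt (‖v‖ ^ 2 + ‖s‖ ^ 2)) ∧
    -- b is coercive
    (∃ μ : ℝ, 0 < μ ∧ ∀ u p, (u, p) ∈ G.graph →
      μ * (‖u‖ ^ 2 + ‖p‖ ^ 2) ≤ (⟪p, a p⟫ + ⟪u, m u⟫).re) ∧
    -- Λ_H is the operator associated with (b, j)
    (∀ φ ψ : HS, (φ, ψ) ∈ dtnGraphH G Gi D Di a m k kstarG ↔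
      ∃ u p u₀, (u, p) ∈ G.graph ∧ memBD G Gi u₀ ∧ u - u₀ ∈ Gi.domain ∧
        k u₀ = φ ∧
        ∀ v s v₀, (v, s) ∈ G.graph → memBD G Gi v₀ → v - v₀ ∈ Gi.domain →
          ⟪s, a p⟫ + ⟪v, m u⟫ = ⟪k v₀, ψ⟫) := by
  have k0 : k 0 = 0 := by
    have h := hk_smul 0 0 (memBD_zero' G Gi)
    simpa using h
  refine ⟨?_, ?_, ?_⟩
  · -- continuity of the form
    refine ⟨‖a‖ + ‖m‖, ?_⟩
    intro u p v s _ _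
    set A := Real.sqrt (‖u‖ ^ 2 + ‖p‖ ^ 2) with hAdef
    set B := Real.sqrt (‖v‖ ^ 2 + ‖s‖ ^ 2) with hBdef
    have hpA : ‖p‖ ≤ A := by
      rw [hAdef]
      calc ‖p‖ = Real.sqrt (‖p‖ ^ 2) := (Real.sqrt_sq (norm_nonneg p)).symm
        _ ≤ Real.sqrt (‖u‖ ^ 2 + ‖p‖ ^ 2) :=
            Real.sqrt_le_sqrt (by nlinarith [sq_nonneg ‖u‖])
    have huA : ‖u‖ ≤ A := by
      rw [hAdef]
      calc ‖u‖ = Real.sqrt (‖u‖ ^ 2) := (Real.sqrt_sq (norm_nonneg u)).symm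
        _ ≤ Real.sqrt (‖u‖ ^ 2 + ‖p‖ ^ 2) :=
            Real.sqrt_le_sqrt (by nlinarith [sq_nonneg ‖p‖])
    have hsB : ‖s‖ ≤ B := by
      rw [hBdef]
      calc ‖s‖ = Real.sqrt (‖s‖ ^ 2) := (Real.sqrt_sq (norm_nonneg s)).symm
        _ ≤ Real.sqrt (‖v‖ ^ 2 + ‖s‖ ^ 2) :=
            Real.sqrt_le_sqrt (by nlinarith [sq_nonneg ‖v‖])
    have hvB : ‖v‖ ≤ B := by
      rw [hBdef]
      calc ‖v‖ = Real.sqrt (‖v‖ ^ 2) := (Real.sqrt_sq (norm_nonneg v)).symm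
        _ ≤ Real.sqrt (‖v‖ ^ 2 + ‖s‖ ^ 2) :=
            Real.sqrt_le_sqrt (by nlinarith [sq_nonneg ‖s‖])
    calc ‖⟪s, a p⟫ + ⟪v, m u⟫‖ ≤ ‖⟪s, a p⟫‖ + ‖⟪v, m u⟫‖ := norm_add_le _ _
      _ ≤ ‖s‖ * ‖a p‖ + ‖v‖ * ‖m u‖ :=
          add_le_add (norm_inner_le_norm _ _) (norm_inner_le_norm _ _)
      _ ≤ B * (‖a‖ * A) + B * (‖m‖ * A) := by
          have h1 : ‖a p‖ ≤ ‖a‖ * A :=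
            (a.le_opNorm p).trans (mul_le_mul_of_nonneg_left hpA (norm_nonneg _))
          have h2 : ‖m u‖ ≤ ‖m‖ * A :=
            (m.le_opNorm u).trans (mul_le_mul_of_nonneg_left huA (norm_nonneg _))
          exact add_le_add
            (mul_le_mul hsB h1 (norm_nonneg _) (Real.sqrt_nonneg _))
            (mul_le_mul hvB h2 (norm_nonneg _) (Real.sqrt_nonneg _))
      _ = (‖a‖ + ‖m‖) * A * B := by ring
  · -- coercivity of the form
    obtain ⟨μa, hμa, hcoA⟩ := ha
    obtain ⟨μm, hμm, hcoM⟩ := hm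
    refine ⟨min μa μm, lt_min hμa hμm, ?_⟩
    intro u p _
    have h1 := hcoA p
    have h2 := hcoM u
    rw [Complex.add_re]
    nlinarith [min_le_left μa μm, min_le_right μa μm, sq_nonneg ‖u‖, sq_nonneg ‖p‖]
  · -- the equivalence
    intro φ ψ
    obtain ⟨hkψG, hkψBD⟩ := hkstar_mem ψ
    have hq : (kstarG ψ, kstar ψ) ∈ D.graph := by
      obtain ⟨p', hp', hperp⟩ := hkψBD
      have hpe : p' = kstarG ψ := graph_snd_unique' G hp' hkψG
      subst hpe
      exact mem_D_of_perp' hDclosed hGi hperp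
    constructor
    · rintro ⟨u₀, hu₀BD, hku₀, u, p, hup, hD, -, huu₀, -, hdiff⟩
      have hdiffG : (a p - kstarG ψ, Di ⟨a p - kstarG ψ, hdiff⟩) ∈ Di.graph :=
        Di.mem_graph ⟨a p - kstarG ψ, hdiff⟩
      have hsubD : (a p - kstarG ψ, m u - kstar ψ) ∈ D.graph := by
        have h := D.graph.sub_mem hD hq
        rwa [Prod.mk_sub_mk] at h
      have hval : Di ⟨a p - kstarG ψ, hdiff⟩ = m u - kstar ψ :=
        graph_snd_unique' D (hDiD hdiffG) hsubD
      have hdiffDi : (a p - kstarG ψ, m u - kstar ψ) ∈ Di.graph := hval ▸ hdiffG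
      refine ⟨u, p, u₀, hup, hu₀BD, huu₀, hku₀, ?_⟩
      intro v s v₀ hvs hv₀BD hvv₀
      obtain ⟨s₀, hv₀G, hv₀perp⟩ := hv₀BD
      have hGi1 : (v - v₀, s - s₀) ∈ Gi.graph := by
        have hg : (v - v₀, Gi ⟨v - v₀, hvv₀⟩) ∈ Gi.graph := Gi.mem_graph ⟨v - v₀, hvv₀⟩
        have hsubG : (v - v₀, s - s₀) ∈ G.graph := by
          have h := G.graph.sub_mem hvs hv₀G
          rwa [Prod.mk_sub_mk] at h
        have hval2 : Gi ⟨v - v₀, hvv₀⟩ = s - s₀ :=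
          graph_snd_unique' G (hGiG hg) hsubG
        exact hval2 ▸ hg
      have e1 : ⟪s - s₀, a p⟫ = -⟪v - v₀, m u⟫ := (hGi _ _).1 hGi1 (a p) (m u) hD
      have e2 : ⟪m u - kstar ψ, v₀⟫ = -⟪a p - kstarG ψ, s₀⟫ :=
        (hDi _ _).1 hdiffDi v₀ s₀ hv₀G
      have e2' : ⟪v₀, m u - kstar ψ⟫ = -⟪s₀, a p - kstarG ψ⟫ := by
        have h := congrArg (starRingEnd ℂ) e2
        simpa only [inner_conj_symm, map_neg] using h
      have e3 := hkstar_adj v₀ s₀ ψ hv₀G ⟨s₀, hv₀G, hv₀perp⟩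
      simp only [inner_sub_left, inner_sub_right] at e1 e2'
      linear_combination e1 + e2' - e3
    · rintro ⟨u, p, u₀, hup, hu₀BD, huu₀, hku₀, hb⟩
      have hDmem : (a p, m u) ∈ D.graph := by
        apply mem_D_of_perp' hDclosed hGi
        intro v w hvw
        have hvdom : v ∈ Gi.domain := graph_fst_mem' Gi hvw
        have h := hb v w 0 (hGiG hvw) (memBD_zero' G Gi) (by simpa using hvdom)
        rw [k0] at h
        simp only [inner_zero_left] at h
        linear_combination h
      have hdiffDi : (a p - kstarG ψ, m u - kstar ψ) ∈ Di.graph := by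
        rw [hDi]
        intro v' s' hv's'
        obtain ⟨v₀, s₀, hv₀G, hv₀BD, hsubGi⟩ := exists_bd_decomp' hGi hGiG hv's'
        have e2 : ⟪s' - s₀, kstarG ψ⟫ = -⟪v' - v₀, kstar ψ⟫ :=
          (hGi _ _).1 hsubGi _ _ hq
        have e3 := hb v' s' v₀ hv's' hv₀BD (graph_fst_mem' Gi hsubGi)
        have e4 := hkstar_adj v₀ s₀ ψ hv₀G hv₀BD
        have h : ⟪v', m u - kstar ψ⟫ + ⟪s', a p - kstarG ψ⟫ = 0 := by
          simp only [inner_sub_left, inner_sub_right] at e2 ⊢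
          linear_combination e3 + e4 - e2
        have h' := congrArg (starRingEnd ℂ) h
        simp only [map_add, inner_conj_symm, map_zero] at h'
        linear_combination h'
      exact ⟨u₀, hu₀BD, hku₀, u, p, hup, hDmem, hu₀BD, huu₀,
        ⟨kstar ψ, hq, fun v t hvt => by
          have h := (hDi _ _).1 hvt (kstar ψ) (kstarG ψ) hkψG
          linear_combination h⟩,
        graph_fst_mem' Di hdiffDi⟩


end DtNPaper
end
end

section
/- Assume the inclusion of dom(G) (graph norm) into H₀ is compact, and let ι : ran(G) → H₁ be the inclusion of the closed subspace ran(G), so that ι* is the orthogonal projection of H₁ onto ran(G). Then: (i) for q ∈ H₁ one has q ∈ dom(D̊) if and only if ι*q ∈ dom(D̊), and in that case D̊q = D̊ι*q; (ii) the operator D̊ι with domain ran(G) ∩ dom(D̊), viewed as an operator from the Hilbert space ran(G) to H₀, is densely defined and closed, and its adjoint is −ι*G (with domain dom(G)); (iii) D̊ι is injective; (iv) the inclusion of dom(D̊ι) (graph norm) into H₁ is compact. -/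
open Filter Topology

noncomputable section

namespace DtNPaper

local notation "⟪" x ", " y "⟫" => (inner ℂ x y : ℂ)

variable {H₀ H₁ HS : Type*}
  [NormedAddCommGroup H₀] [InnerProductSpace ℂ H₀] [CompleteSpace H₀]
  [NormedAddCommGroup H₁] [InnerProductSpace ℂ H₁] [CompleteSpace H₁]

/-- Key duality lemma: if `(u, z)` is orthogonal (in the `L²` product sense) to the
rotated graph of `D̊ = -G*`, then `(u, z)` belongs to the (closed) graph of `G`. -/
theorem key_mem_graph (G : H₀ →ₗ.[ℂ] H₁) (Di : H₁ →ₗ.[ℂ] H₀)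
    (hGclosed : IsClosed (G.graph : Set (H₀ × H₁)))
    (hDi : ∀ q w, (q, w) ∈ Di.graph ↔ ∀ u p, (u, p) ∈ G.graph → ⟪w, u⟫ = -⟪q, p⟫)
    (u : H₀) (z : H₁)
    (h : ∀ q w, (q, w) ∈ Di.graph → ⟪w, u⟫ + ⟪q, z⟫ = 0) :
    (u, z) ∈ G.graph := by
  classical
  set e := WithLp.prodContinuousLinearEquiv 2 ℂ H₀ H₁ with he
  set M : Submodule ℂ (WithLp 2 (H₀ × H₁)) :=
    G.graph.comap ((WithLp.linearEquiv 2 ℂ (H₀ × H₁) :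
      WithLp 2 (H₀ × H₁) ≃ₗ[ℂ] H₀ × H₁) : WithLp 2 (H₀ × H₁) →ₗ[ℂ] H₀ × H₁) with hMdef
  have hMset : (M : Set (WithLp 2 (H₀ × H₁))) = ⇑e ⁻¹' (G.graph : Set (H₀ × H₁)) := rfl
  have hMclosed : IsClosed (M : Set (WithLp 2 (H₀ × H₁))) := by
    rw [hMset]; exact hGclosed.preimage e.continuous
  have hMM : Mᗮᗮ = M := by
    rw [Submodule.orthogonal_orthogonal_eq_closure, hMclosed.submodule_topologicalClosure_eq]
  set x : WithLp 2 (H₀ × H₁) := (WithLp.equiv 2 (H₀ × H₁)).symm (u, z) with hxdef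
  have hx : x ∈ Mᗮᗮ := by
    rw [Submodule.mem_orthogonal]
    intro y hy
    have hqw : (y.snd, y.fst) ∈ Di.graph := by
      rw [hDi]
      intro u' p' hup
      have hm : (WithLp.equiv 2 (H₀ × H₁)).symm (u', p') ∈ M := hup
      have h0 := (Submodule.mem_orthogonal M y).1 hy _ hm
      rw [WithLp.prod_inner_apply] at h0
      simp only [WithLp.equiv_symm_apply, WithLp.toLp_fst, WithLp.toLp_snd, WithLp.ofLp_fst, WithLp.ofLp_snd] at h0
      have h1 := congrArg (starRingEnd ℂ) h0
      simp only [map_add, inner_conj_symm, map_zero] at h1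
      linear_combination h1
    have h2 := h _ _ hqw
    rw [WithLp.prod_inner_apply]
    simpa [hxdef] using h2
  rw [hMM] at hx
  exact hx

/-- From the compact embedding of `dom G` into `H₀` and closedness of `G`, there is a
constant `c` bounding `‖u‖` by `c * ‖G u‖` for `u` orthogonal to the kernel of `G`. -/
theorem bound_of_compact (G : H₀ →ₗ.[ℂ] H₁)
    (hGclosed : IsClosed (G.graph : Set (H₀ × H₁))) (hcpt : CompactIncl G) :
    ∃ c : ℝ, 0 ≤ c ∧ ∀ u p, (u, p) ∈ G.graph →
      (∀ k, (k, (0 : H₁)) ∈ G.graph → ⟪k, u⟫ = 0) → ‖u‖ ≤ c * ‖p‖ := by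
  by_contra hcon
  push_neg at hcon
  have hseq : ∀ n : ℕ, ∃ u p, (u, p) ∈ G.graph ∧
      (∀ k, (k, (0:H₁)) ∈ G.graph → ⟪k, u⟫ = 0) ∧ ((n:ℝ)+1) * ‖p‖ < ‖u‖ := by
    intro n
    obtain ⟨u, p, h1, h2, h3⟩ := hcon ((n:ℝ)+1) (by positivity)
    exact ⟨u, p, h1, h2, h3⟩
  choose U Pp hmem horth hlt using hseq
  have hU0 : ∀ n, U n ≠ 0 := by
    intro n h0
    have := hlt n
    rw [h0, norm_zero] at this
    nlinarith [norm_nonneg (Pp n), Nat.cast_nonneg (α := ℝ) n]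
  have hUpos : ∀ n, 0 < ‖U n‖ := fun n => norm_pos_iff.mpr (hU0 n)
  set u' : ℕ → H₀ := fun n => ((‖U n‖⁻¹ : ℝ) : ℂ) • U n with hu'def
  set p' : ℕ → H₁ := fun n => ((‖U n‖⁻¹ : ℝ) : ℂ) • Pp n with hp'def
  have hnorm : ∀ n, ‖u' n‖ = 1 := by
    intro n
    rw [hu'def]
    simp only [norm_smul, Complex.norm_real, Real.norm_eq_abs, abs_inv, abs_norm]
    exact inv_mul_cancel₀ (norm_ne_zero_iff.mpr (hU0 n))
  have hpn : ∀ n, ‖p' n‖ ≤ 1 / ((n:ℝ)+1) := by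
    intro n
    have h1 : ‖p' n‖ = ‖U n‖⁻¹ * ‖Pp n‖ := by
      rw [hp'def]
      simp [norm_smul, Complex.norm_real, Real.norm_eq_abs, abs_inv, abs_norm]
    have hn1 : (0:ℝ) < (n:ℝ)+1 := by positivity
    have h2 : ‖Pp n‖ ≤ ‖U n‖ / ((n:ℝ)+1) := by
      rw [le_div_iff₀ hn1]; nlinarith [hlt n]
    rw [h1]
    calc ‖U n‖⁻¹ * ‖Pp n‖ ≤ ‖U n‖⁻¹ * (‖U n‖ / ((n:ℝ)+1)) :=
          mul_le_mul_of_nonneg_left h2 (inv_nonneg.mpr (norm_nonneg _))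
      _ = 1 / ((n:ℝ)+1) := by
          rw [mul_div_assoc', inv_mul_cancel₀ (norm_ne_zero_iff.mpr (hU0 n))]
  have hmem' : ∀ n, (u' n, p' n) ∈ G.graph := by
    intro n
    exact G.graph.smul_mem (((‖U n‖⁻¹ : ℝ) : ℂ)) (hmem n)
  obtain ⟨φ, hφ, x, hx⟩ := hcpt u' p' hmem' ⟨2, by
    intro n
    have h1 : ‖p' n‖ ≤ 1 := by
      have hn1 : (1:ℝ) ≤ (n:ℝ)+1 := by
        have := Nat.cast_nonneg (α := ℝ) n; linarith
      have := hpn n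
      have h2 : 1 / ((n:ℝ)+1) ≤ 1 := by
        rw [div_le_one (by positivity)]; linarith
      linarith
    have h0 := norm_nonneg (p' n)
    rw [hnorm n]
    nlinarith⟩
  have hp0 : Tendsto (fun j => p' (φ j)) atTop (𝓝 0) := by
    have h1 : Tendsto (fun n => p' n) atTop (𝓝 0) := by
      rw [tendsto_zero_iff_norm_tendsto_zero]
      exact squeeze_zero (fun n => norm_nonneg _) (fun n => hpn n)
        tendsto_one_div_add_atTop_nhds_zero_nat
    exact h1.comp hφ.tendsto_atTop
  have hgr : (x, (0:H₁)) ∈ G.graph := by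
    have h2 : Tendsto (fun j => (u' (φ j), p' (φ j))) atTop (𝓝 (x, 0)) :=
      hx.prodMk_nhds hp0
    exact hGclosed.mem_of_tendsto h2 (Filter.Eventually.of_forall fun j => hmem' (φ j))
  have hxx : ⟪x, x⟫ = 0 := by
    have h3 : Tendsto (fun j => ⟪x, u' (φ j)⟫) atTop (𝓝 ⟪x, x⟫) :=
      Tendsto.inner tendsto_const_nhds hx
    have h4 : ∀ j, ⟪x, u' (φ j)⟫ = 0 := by
      intro j
      rw [hu'def]
      simp only [inner_smul_right]
      rw [horth (φ j) x hgr, mul_zero]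
    rw [show (fun j => ⟪x, u' (φ j)⟫) = fun _ => (0:ℂ) from funext h4] at h3
    exact (tendsto_nhds_unique h3 tendsto_const_nhds)
  have hx0 : x = 0 := inner_self_eq_zero.mp hxx
  have hn1 : Tendsto (fun j => ‖u' (φ j)‖) atTop (𝓝 ‖x‖) := hx.norm
  rw [hx0, norm_zero] at hn1
  have hconst : (fun j => ‖u' (φ j)‖) = fun _ => (1:ℝ) := funext fun j => hnorm (φ j)
  rw [hconst] at hn1
  have : (1:ℝ) = 0 := tendsto_nhds_unique tendsto_const_nhds hn1
  norm_num at this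

/-- Lemma 4.4 (i)-(iv): properties of the operator `D̊ι` with domain
`ran G ∩ dom D̊`, viewed as an operator from `ran G` into `H₀`; here `P = ι*`
is the orthogonal projection of `H₁` onto the closed subspace `ran G`. -/
theorem statement12
    (G Gi : H₀ →ₗ.[ℂ] H₁) (D Di : H₁ →ₗ.[ℂ] H₀)
    (hGdense : Dense (G.domain : Set H₀)) (hDdense : Dense (D.domain : Set H₁))
    (hGclosed : IsClosed (G.graph : Set (H₀ × H₁)))
    (hDclosed : IsClosed (D.graph : Set (H₁ × H₀)))
    (hGi : ∀ u w, (u, w) ∈ Gi.graph ↔ ∀ q s, (q, s) ∈ D.graph → ⟪w, q⟫ = -⟪u, s⟫)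
    (hDi : ∀ q w, (q, w) ∈ Di.graph ↔ ∀ u p, (u, p) ∈ G.graph → ⟪w, u⟫ = -⟪q, p⟫)
    (hGiG : Gi.graph ≤ G.graph) (hDiD : Di.graph ≤ D.graph)
    (hcpt : CompactIncl G)
    (P : H₁ → H₁)
    (hP : ∀ q : H₁, P q ∈ ranSet G ∧ ∀ r ∈ ranSet G, ⟪r, q - P q⟫ = 0) :
    -- (i) q ∈ dom D̊ iff ι* q ∈ dom D̊, and then D̊ q = D̊ ι* q
    (∀ q w, (q, w) ∈ Di.graph ↔ (P q, w) ∈ Di.graph) ∧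
    -- (ii) D̊ι is densely defined in ran G ...
    (ranSet G ⊆ closure {q : H₁ | q ∈ ranSet G ∧ q ∈ Di.domain}) ∧
    -- ... and closed ...
    IsClosed {z : H₁ × H₀ | z.1 ∈ ranSet G ∧ z ∈ Di.graph} ∧
    -- ... with adjoint (D̊ι)* = -ι* G (with domain dom G)
    (∀ (u : H₀) (z : H₁),
      (∃ p, (u, p) ∈ G.graph ∧ z = -(P p)) ↔
      (z ∈ ranSet G ∧ ∀ q w, q ∈ ranSet G → (q, w) ∈ Di.graph →
        ⟪z, q⟫ = ⟪u, w⟫)) ∧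
    -- (iii) D̊ι is injective
    (∀ q w, q ∈ ranSet G → (q, w) ∈ Di.graph → w = 0 → q = 0) ∧
    -- (iv) the inclusion of dom(D̊ι) (graph norm) into H₁ is compact
    (∀ (q : ℕ → H₁) (w : ℕ → H₀),
      (∀ n, q n ∈ ranSet G ∧ (q n, w n) ∈ Di.graph) →
      (∃ C : ℝ, ∀ n, ‖q n‖ ^ 2 + ‖w n‖ ^ 2 ≤ C) →
      ∃ σ : ℕ → ℕ, StrictMono σ ∧
        ∃ r : H₁, Tendsto (fun j => q (σ j)) atTop (𝓝 r)) := by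
  classical
  -- the range of G as a submodule
  set Ran : Submodule ℂ H₁ := G.graph.map (LinearMap.snd ℂ H₀ H₁) with hRandef
  have hRan : ∀ p : H₁, p ∈ Ran ↔ p ∈ ranSet G := by
    intro p
    constructor
    · rintro ⟨⟨a, b⟩, hab, rfl⟩
      exact ⟨a, hab⟩
    · rintro ⟨a, ha⟩
      exact ⟨(a, p), ha, rfl⟩
  -- the projection respects inner products against range elements
  have hPinner : ∀ (q : H₁) (p : H₁), p ∈ ranSet G → ⟪q, p⟫ = ⟪P q, p⟫ := by
    intro q p hp
    have h1 := (hP q).2 p hp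
    have h2 := congrArg (starRingEnd ℂ) h1
    rw [map_zero, inner_conj_symm, inner_sub_left] at h2
    exact sub_eq_zero.mp h2
  -- part (i)
  have part1 : ∀ q w, (q, w) ∈ Di.graph ↔ (P q, w) ∈ Di.graph := by
    intro q w
    rw [hDi, hDi]
    constructor <;> intro H u p hup
    · rw [H u p hup, hPinner q p ⟨u, hup⟩]
    · rw [H u p hup, ← hPinner q p ⟨u, hup⟩]
  -- P fixes the range
  have Pfix : ∀ x ∈ ranSet G, P x = x := by
    intro x hx
    have hsub : x - P x ∈ ranSet G := by
      have := Ran.sub_mem ((hRan x).2 hx) ((hRan _).2 (hP x).1)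
      exact (hRan _).1 this
    have h4 : ⟪x - P x, x - P x⟫ = 0 := (hP x).2 _ hsub
    have h5 := inner_self_eq_zero.mp h4
    rw [sub_eq_zero] at h5
    exact h5.symm
  -- the range is closed
  have hRclosed : IsClosed (ranSet G : Set H₁) := by
    refine isClosed_of_closure_subset ?_
    intro r hr
    have h1 := (hP r).2
    have h2 : ⟪r, r - P r⟫ = 0 := by
      have hc : IsClosed {s : H₁ | ⟪s, r - P r⟫ = 0} :=
        isClosed_eq (continuous_id.inner continuous_const) continuous_const
      exact (closure_minimal (fun s hs => h1 s hs) hc) hr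
    have h3 : ⟪P r, r - P r⟫ = 0 := h1 _ (hP r).1
    have h4 : ⟪r - P r, r - P r⟫ = 0 := by
      rw [inner_sub_left, h2, h3]; ring
    have h5 := inner_self_eq_zero.mp h4
    rw [sub_eq_zero] at h5
    rw [h5]
    exact (hP r).1
  -- part (ii): density
  have part2 : ranSet G ⊆ closure {q : H₁ | q ∈ ranSet G ∧ q ∈ Di.domain} := by
    intro r hr
    set Sm : Submodule ℂ H₁ := Ran ⊓ Di.domain with hSmdef
    have hsub : (Sm : Set H₁) ⊆ {q : H₁ | q ∈ ranSet G ∧ q ∈ Di.domain} :=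
      fun q hq => ⟨(hRan q).1 hq.1, hq.2⟩
    refine closure_mono hsub ?_
    have hmem2 : r ∈ Smᗮᗮ := by
      rw [Submodule.mem_orthogonal]
      intro y hy
      have hPyD : ∀ q w, (q, w) ∈ Di.graph → ⟪w, (0:H₀)⟫ + ⟪q, P y⟫ = 0 := by
        intro q w hqw
        have hPq : (P q, w) ∈ Di.graph := (part1 q w).1 hqw
        have hPqSm : P q ∈ Sm :=
          ⟨(hRan _).2 (hP q).1, LinearPMap.mem_domain_of_mem_graph hPq⟩
        have h0 : ⟪P q, y⟫ = 0 := (Submodule.mem_orthogonal Sm y).1 hy _ hPqSm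
        have h1 : ⟪P q, y - P y⟫ = 0 := (hP y).2 _ (hP q).1
        rw [inner_sub_right] at h1
        have h2 : ⟪P q, P y⟫ = 0 := by linear_combination h0 - h1
        have h3 : ⟪q, P y⟫ = 0 := by
          rw [hPinner q (P y) (hP y).1]; exact h2
        simp [h3]
      have hkey := key_mem_graph G Di hGclosed hDi 0 (P y) hPyD
      have hPy0 : P y = 0 := by
        rcases G.mem_graph_iff.mp hkey with ⟨a, ha0, haP⟩
        have ha : a = 0 := by
          ext; exact ha0
        rw [ha] at haP
        simpa using haP.symm
      have h5 : ⟪r, y - P y⟫ = 0 := (hP y).2 r hr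
      have h6 : ⟪r, y⟫ = 0 := by
        rw [inner_sub_right, hPy0, inner_zero_right, sub_zero] at h5
        exact h5
      have h7 := congrArg (starRingEnd ℂ) h6
      rwa [inner_conj_symm, map_zero] at h7
    have h8 : r ∈ Sm.topologicalClosure := by
      rw [← Submodule.orthogonal_orthogonal_eq_closure]; exact hmem2
    show r ∈ closure (Sm : Set H₁)
    rw [← Submodule.topologicalClosure_coe]
    exact h8
  -- Di graph is closed
  have hDiClosed : IsClosed {z : H₁ × H₀ | z ∈ Di.graph} := by
    have hset : {z : H₁ × H₀ | z ∈ Di.graph} =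
        ⋂ (up : H₀ × H₁) (_ : up ∈ G.graph),
          {z : H₁ × H₀ | ⟪z.2, up.1⟫ = -⟪z.1, up.2⟫} := by
      ext z
      simp only [Set.mem_setOf_eq, Set.mem_iInter]
      constructor
      · intro hz up hup
        exact (hDi z.1 z.2).1 hz up.1 up.2 hup
      · intro hz
        exact (hDi z.1 z.2).2 fun u p hup => hz (u, p) hup
    rw [hset]
    refine isClosed_iInter fun up => isClosed_iInter fun _ => ?_
    exact isClosed_eq (continuous_snd.inner continuous_const)
      ((continuous_fst.inner continuous_const)).neg
  have part3 : IsClosed {z : H₁ × H₀ | z.1 ∈ ranSet G ∧ z ∈ Di.graph} := by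
    have : {z : H₁ × H₀ | z.1 ∈ ranSet G ∧ z ∈ Di.graph} =
        (Prod.fst ⁻¹' (ranSet G)) ∩ {z : H₁ × H₀ | z ∈ Di.graph} := rfl
    rw [this]
    exact (hRclosed.preimage continuous_fst).inter hDiClosed
  -- part (ii): adjoint
  have part4 : ∀ (u : H₀) (z : H₁),
      (∃ p, (u, p) ∈ G.graph ∧ z = -(P p)) ↔
      (z ∈ ranSet G ∧ ∀ q w, q ∈ ranSet G → (q, w) ∈ Di.graph →
        ⟪z, q⟫ = ⟪u, w⟫) := by
    intro u z
    constructor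
    · rintro ⟨p, hup, rfl⟩
      refine ⟨?_, ?_⟩
      · have : P p ∈ Ran := (hRan _).2 (hP p).1
        exact (hRan _).1 (Ran.neg_mem this)
      · intro q w hqR hqw
        have h1 : ⟪w, u⟫ = -⟪q, p⟫ := (hDi q w).1 hqw u p hup
        have h2 : ⟪u, w⟫ = -⟪p, q⟫ := by
          have h3 := congrArg (starRingEnd ℂ) h1
          rwa [inner_conj_symm, map_neg, inner_conj_symm] at h3
        calc ⟪-(P p), q⟫ = -⟪P p, q⟫ := inner_neg_left _ _
          _ = -⟪p, q⟫ := by rw [hPinner p q hqR]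
          _ = ⟪u, w⟫ := h2.symm
    · rintro ⟨hzR, hadj⟩
      have hadj' : ∀ q w, (q, w) ∈ Di.graph → ⟪w, u⟫ + ⟪q, -z⟫ = 0 := by
        intro q w hqw
        have hPq : (P q, w) ∈ Di.graph := (part1 q w).1 hqw
        have h1 : ⟪z, P q⟫ = ⟪u, w⟫ := hadj (P q) w (hP q).1 hPq
        have h2 : ⟪z, q - P q⟫ = 0 := (hP q).2 z hzR
        rw [inner_sub_right] at h2
        have h3 : ⟪z, q⟫ = ⟪u, w⟫ := by linear_combination h2 + h1
        have h4 : ⟪q, z⟫ = ⟪w, u⟫ := by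
          have h5 := congrArg (starRingEnd ℂ) h3
          rwa [inner_conj_symm, inner_conj_symm] at h5
        rw [inner_neg_right, h4]; ring
      have hkey := key_mem_graph G Di hGclosed hDi u (-z) hadj'
      refine ⟨-z, hkey, ?_⟩
      have hz' : -z ∈ ranSet G := (hRan _).1 (Ran.neg_mem ((hRan _).2 hzR))
      rw [Pfix (-z) hz', neg_neg]
  -- part (iii)
  have part5 : ∀ q w, q ∈ ranSet G → (q, w) ∈ Di.graph → w = 0 → q = 0 := by
    intro q w hqR hqw hw0
    rcases hqR with ⟨a, ha⟩
    have h1 := (hDi q w).1 hqw a q ha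
    rw [hw0, inner_zero_left] at h1
    have h2 : ⟪q, q⟫ = 0 := by linear_combination h1
    exact inner_self_eq_zero.mp h2
  refine ⟨part1, part2, part3, part4, part5, ?_⟩
  -- part (iv)
  intro q w hqw hbdd
  obtain ⟨C, hC⟩ := hbdd
  have hC0 : 0 ≤ C := le_trans (by positivity) (hC 0)
  obtain ⟨c, hc0, hc⟩ := bound_of_compact G hGclosed hcpt
  set K : Submodule ℂ H₀ :=
    Submodule.comap ((LinearMap.id : H₀ →ₗ[ℂ] H₀).prod 0) G.graph with hKdef
  have hKmem : ∀ x : H₀, x ∈ K ↔ (x, (0:H₁)) ∈ G.graph := fun x => Iff.rfl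
  have hKclosed : IsClosed (K : Set H₀) := by
    have : (K : Set H₀) = (fun x : H₀ => (x, (0:H₁))) ⁻¹' (G.graph : Set (H₀ × H₁)) := rfl
    rw [this]
    exact hGclosed.preimage (continuous_id.prodMk continuous_const)
  haveI : CompleteSpace K := hKclosed.completeSpace_coe
  have hex : ∀ n, ∃ a, (a, q n) ∈ G.graph := fun n => (hqw n).1
  choose a ha using hex
  set v : ℕ → H₀ := fun n => a n - (K.orthogonalProjection (a n) : H₀) with hvdef
  have hvmem : ∀ n, (v n, q n) ∈ G.graph := by
    intro n
    have h1 : ((K.orthogonalProjection (a n) : H₀), (0:H₁)) ∈ G.graph :=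
      (hKmem _).1 (K.orthogonalProjection (a n)).2
    have := G.graph.sub_mem (ha n) h1
    simpa [hvdef] using this
  have hvorth : ∀ n, ∀ k, (k, (0:H₁)) ∈ G.graph → ⟪k, v n⟫ = 0 := by
    intro n k hk
    have h1 : v n ∈ Kᗮ := K.sub_starProjection_mem_orthogonal (a n)
    exact (Submodule.mem_orthogonal K (v n)).1 h1 k ((hKmem k).2 hk)
  have hqb : ∀ n, ‖q n‖ ≤ Real.sqrt C := by
    intro n
    have h1 : ‖q n‖^2 ≤ C := by nlinarith [hC n, sq_nonneg ‖w n‖]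
    calc ‖q n‖ = Real.sqrt (‖q n‖^2) := (Real.sqrt_sq (norm_nonneg _)).symm
      _ ≤ Real.sqrt C := Real.sqrt_le_sqrt h1
  have hwb : ∀ n, ‖w n‖ ≤ Real.sqrt C := by
    intro n
    have h1 : ‖w n‖^2 ≤ C := by nlinarith [hC n, sq_nonneg ‖q n‖]
    calc ‖w n‖ = Real.sqrt (‖w n‖^2) := (Real.sqrt_sq (norm_nonneg _)).symm
      _ ≤ Real.sqrt C := Real.sqrt_le_sqrt h1
  have hvb : ∀ n, ‖v n‖ ≤ c * Real.sqrt C := by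
    intro n
    calc ‖v n‖ ≤ c * ‖q n‖ := hc (v n) (q n) (hvmem n) (hvorth n)
      _ ≤ c * Real.sqrt C := mul_le_mul_of_nonneg_left (hqb n) hc0
  obtain ⟨φ, hφ, x, hx⟩ := hcpt v q hvmem ⟨(c * Real.sqrt C)^2 + C, by
    intro n
    have h1 : ‖v n‖^2 ≤ (c * Real.sqrt C)^2 := by
      nlinarith [hvb n, norm_nonneg (v n)]
    have h2 : ‖q n‖^2 ≤ C := by nlinarith [hC n, sq_nonneg ‖w n‖]
    linarith⟩
  refine ⟨φ, hφ, ?_⟩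
  set B : ℝ := 2 * Real.sqrt C with hBdef
  have hB0 : 0 ≤ B := by positivity
  have hest : ∀ i j, ‖q i - q j‖^2 ≤ B * ‖v i - v j‖ := by
    intro i j
    have hg : (v i - v j, q i - q j) ∈ G.graph := by
      have := G.graph.sub_mem (hvmem i) (hvmem j)
      simpa using this
    have hd : (q i - q j, w i - w j) ∈ Di.graph := by
      have := Di.graph.sub_mem (hqw i).2 (hqw j).2
      simpa using this
    have h1 : ⟪w i - w j, v i - v j⟫ = -⟪q i - q j, q i - q j⟫ :=
      (hDi _ _).1 hd _ _ hg
    have h2 : ⟪q i - q j, q i - q j⟫ = ((‖q i - q j‖ : ℝ) : ℂ)^2 :=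
      inner_self_eq_norm_sq_to_K _
    have h3 : ‖q i - q j‖^2 = ‖⟪w i - w j, v i - v j⟫‖ := by
      rw [h1, norm_neg, h2]
      rw [norm_pow]
      simp [Complex.norm_real]
    calc ‖q i - q j‖^2 = ‖⟪w i - w j, v i - v j⟫‖ := h3
      _ ≤ ‖w i - w j‖ * ‖v i - v j‖ := norm_inner_le_norm _ _
      _ ≤ B * ‖v i - v j‖ := by
          have h4 : ‖w i - w j‖ ≤ B := by
            calc ‖w i - w j‖ ≤ ‖w i‖ + ‖w j‖ := norm_sub_le _ _
              _ ≤ B := by rw [hBdef]; linarith [hwb i, hwb j]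
          exact mul_le_mul_of_nonneg_right h4 (norm_nonneg _)
  have hvCauchy : CauchySeq (fun j => v (φ j)) := hx.cauchySeq
  have hqCauchy : CauchySeq (fun j => q (φ j)) := by
    rw [cauchySeq_iff_tendsto_dist_atTop_0] at hvCauchy ⊢
    have hle : ∀ mn : ℕ × ℕ, dist (q (φ mn.1)) (q (φ mn.2)) ≤
        Real.sqrt (B * dist (v (φ mn.1)) (v (φ mn.2))) := by
      intro mn
      rw [dist_eq_norm, dist_eq_norm]
      have h1 := hest (φ mn.1) (φ mn.2)
      calc ‖q (φ mn.1) - q (φ mn.2)‖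
          = Real.sqrt (‖q (φ mn.1) - q (φ mn.2)‖^2) := (Real.sqrt_sq (norm_nonneg _)).symm
        _ ≤ Real.sqrt (B * ‖v (φ mn.1) - v (φ mn.2)‖) := Real.sqrt_le_sqrt h1
    have hsq : Tendsto (fun mn : ℕ × ℕ =>
        Real.sqrt (B * dist (v (φ mn.1)) (v (φ mn.2)))) atTop (𝓝 0) := by
      have h2 : Tendsto (fun d : ℝ => Real.sqrt (B * d)) (𝓝 0) (𝓝 0) := by
        have hcont : Continuous fun d : ℝ => Real.sqrt (B * d) :=
          Real.continuous_sqrt.comp (continuous_const.mul continuous_id)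
        have h3 := hcont.tendsto 0
        simpa using h3
      exact h2.comp hvCauchy
    exact squeeze_zero' (Filter.Eventually.of_forall fun mn => dist_nonneg)
      (Filter.Eventually.of_forall hle) hsq
  exact cauchySeq_tendsto_of_complete hqCauchy

end DtNPaper
end
end

section
/- Let H̃ be a complex Hilbert space, M ∈ L(H̃), A a skew-adjoint operator in H̃ (A* = −A), and (Mₙ)ₙ a sequence in L(H̃) converging to M in the weak operator topology. Assume the inclusion of dom(A) (graph norm) into H̃ is compact and there is λ > 0 with Re(Mₙx, x) ≥ λ‖x‖² for all n and all x ∈ H̃. Let (xₙ)ₙ be a sequence in H̃ converging weakly to x ∈ H̃. Then M + A (domain dom(A)) is bijective onto H̃ and (Mₙ + A)^{-1} xₙ converges weakly in dom(A) (graph norm) to (M + A)^{-1} x. -/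
open Filter Topology

noncomputable section

namespace DtNPaper

local notation "⟪" x ", " y "⟫" => (inner ℂ x y : ℂ)

variable {H₀ H₁ HS : Type*}
  [NormedAddCommGroup H₀] [InnerProductSpace ℂ H₀] [CompleteSpace H₀]
  [NormedAddCommGroup H₁] [InnerProductSpace ℂ H₁] [CompleteSpace H₁]

section AuxWeak

variable {H : Type*} [NormedAddCommGroup H] [InnerProductSpace ℂ H] [CompleteSpace H]

private lemma bddOfWeak (x : ℕ → H) (xs : H)
    (hx : ∀ y : H, Tendsto (fun n => ⟪y, x n⟫) atTop (𝓝 ⟪y, xs⟫)) :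
    ∃ C : ℝ, 0 ≤ C ∧ ∀ n, ‖x n‖ ≤ C := by
  obtain ⟨C, hC⟩ := banach_steinhaus (g := fun n => innerSL ℂ (x n)) (fun y => by
    obtain ⟨C, hC⟩ := (hx y).norm.bddAbove_range
    refine ⟨C, fun n => ?_⟩
    have : ‖⟪y, x n⟫‖ ≤ C := hC (Set.mem_range_self n)
    simpa [innerSL_apply_apply, norm_inner_symm] using this)
  refine ⟨max C 0, le_max_right _ _, fun n => ?_⟩
  have := hC n
  rw [innerSL_apply_norm] at this
  exact le_trans this (le_max_left _ _)

end AuxWeak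

set_option maxHeartbeats 1000000

/-- Lemma 4.5: if `Mₙ → M` in the weak operator topology, `A` is skew-adjoint
with compact inclusion `dom A ⊆ H̃`, `Re (Mₙ x, x) ≥ λ ‖x‖²`, and `xₙ ⇀ x`,
then `M + A` is invertible and `(Mₙ + A)⁻¹ xₙ ⇀ (M + A)⁻¹ x` weakly in
`dom A`. -/
theorem statement13 {H : Type*} [NormedAddCommGroup H] [InnerProductSpace ℂ H]
    [CompleteSpace H]
    (M : H →L[ℂ] H) (Mseq : ℕ → H →L[ℂ] H) (A : H →ₗ.[ℂ] H)
    (hAdense : Dense (A.domain : Set H))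
    (hskew : ∀ x y, ((x, -y) ∈ A.graph ↔
      ∀ u v, (u, v) ∈ A.graph → ⟪y, u⟫ = ⟪x, v⟫))
    (hMconv : ∀ x y : H, Tendsto (fun n => ⟪y, Mseq n x⟫) atTop (𝓝 ⟪y, M x⟫))
    (hAcpt : CompactIncl A)
    (lam : ℝ) (hlam : 0 < lam)
    (hMn : ∀ n (x : H), lam * ‖x‖ ^ 2 ≤ (⟪x, Mseq n x⟫).re)
    (x : ℕ → H) (xs : H)
    (hx : ∀ y : H, Tendsto (fun n => ⟪y, x n⟫) atTop (𝓝 ⟪y, xs⟫)) :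
    -- M + A is bijective from dom A onto H
    (∀ f : H, ∃! z : H × H, z ∈ A.graph ∧ M z.1 + z.2 = f) ∧
    -- (Mₙ + A)⁻¹ xₙ converges weakly in dom A (graph inner product) to (M + A)⁻¹ x
    (∀ (z : ℕ → H) (v : ℕ → H) (zs vs : H),
      (∀ n, (z n, v n) ∈ A.graph ∧ Mseq n (z n) + v n = x n) →
      (zs, vs) ∈ A.graph → M zs + vs = xs →
      ∀ y w, (y, w) ∈ A.graph →
        Tendsto (fun n => ⟪y, z n⟫ + ⟪w, v n⟫) atTop
          (𝓝 (⟪y, zs⟫ + ⟪w, vs⟫))) := by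
  -- skew-adjointness facts
  have hS1 : ∀ z v, (z, v) ∈ A.graph → ∀ u q, (u, q) ∈ A.graph → ⟪v, u⟫ = -⟪z, q⟫ := by
    intro z v hzv u q huq
    have := (hskew z (-v)).mp (by simpa using hzv) u q huq
    rw [inner_neg_left] at this
    linear_combination -this
  have hS3 : ∀ z v, (∀ u q, (u, q) ∈ A.graph → ⟪v, u⟫ = -⟪z, q⟫) → (z, v) ∈ A.graph := by
    intro z v h
    have := (hskew z (-v)).mpr (fun u q huq => by
      rw [inner_neg_left, h u q huq, neg_neg])
    simpa using this
  have hS2 : ∀ z v, (z, v) ∈ A.graph → (⟪z, v⟫).re = 0 := by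
    intro z v hzv
    have h := hS1 z v hzv z v hzv
    have h2 : (starRingEnd ℂ) ⟪z, v⟫ = -⟪z, v⟫ := by rw [inner_conj_symm]; exact h
    have h3 := congrArg Complex.re h2
    simp only [Complex.conj_re, Complex.neg_re] at h3
    linarith
  -- coercivity of M
  have hMcoer : ∀ u : H, lam * ‖u‖ ^ 2 ≤ (⟪u, M u⟫).re := by
    intro u
    have hre : Tendsto (fun n => (⟪u, Mseq n u⟫).re) atTop (𝓝 (⟪u, M u⟫).re) :=
      (Complex.continuous_re.tendsto _).comp (hMconv u u)
    exact ge_of_tendsto' hre (fun n => hMn n u)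
  -- uniqueness
  have huniq : ∀ z v z' v', (z, v) ∈ A.graph → (z', v') ∈ A.graph →
      M z + v = M z' + v' → z = z' ∧ v = v' := by
    intro z v z' v' h h' heq
    have hd : (z - z', v - v') ∈ A.graph := by
      have := A.graph.sub_mem h h'
      simpa [Prod.sub_def] using this
    have heq0 : M (z - z') + (v - v') = 0 := by
      have h9 : (M z + v) - (M z' + v') = 0 := sub_eq_zero.mpr heq
      rw [map_sub]
      calc M z - M z' + (v - v') = (M z + v) - (M z' + v') := by abel
      _ = 0 := h9
    have hMd : M (z - z') = -(v - v') := eq_neg_of_add_eq_zero_left heq0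
    have hre : (⟪z - z', M (z - z')⟫).re = 0 := by
      rw [hMd, inner_neg_right]
      have := hS2 _ _ hd
      simp [Complex.neg_re, this]
    have h0 : ‖z - z'‖ ^ 2 ≤ 0 := by nlinarith [hMcoer (z - z')]
    have hzz : z - z' = 0 := by
      have h1 : ‖z - z'‖ ^ 2 = 0 := le_antisymm h0 (by positivity)
      have h2 : ‖z - z'‖ = 0 := by nlinarith [norm_nonneg (z - z')]
      exact norm_eq_zero.mp h2
    have hz : z = z' := sub_eq_zero.mp hzz
    refine ⟨hz, ?_⟩
    have : v - v' = 0 := by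
      have := heq0
      rw [hzz] at this
      simpa using this
    exact sub_eq_zero.mp this
  -- graph is closed
  have hgraph_closed : IsClosed (A.graph : Set (H × H)) := by
    have hset : (A.graph : Set (H × H)) =
        ⋂ (u : H) (q : H) (_ : (u, q) ∈ A.graph), {p : H × H | ⟪p.2, u⟫ = -⟪p.1, q⟫} := by
      ext p
      simp only [Set.mem_iInter, Set.mem_setOf_eq, SetLike.mem_coe]
      constructor
      · intro h u q huq; exact hS1 p.1 p.2 h u q huq
      · intro h; exact hS3 p.1 p.2 h
    rw [hset]
    refine isClosed_iInter fun u => isClosed_iInter fun q => isClosed_iInter fun _ => ?_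
    exact isClosed_eq (continuous_snd.inner continuous_const)
      ((continuous_fst.inner continuous_const).neg)
  haveI : CompleteSpace A.graph := hgraph_closed.completeSpace_coe
  -- the operator graph → H
  set S : A.graph →L[ℂ] H :=
    (M.comp (ContinuousLinearMap.fst ℂ H H) + ContinuousLinearMap.snd ℂ H H).comp
      A.graph.subtypeL with hSdef
  have hSapply : ∀ p : A.graph, S p = M (p : H × H).1 + (p : H × H).2 := fun p => rfl
  -- basic estimates
  have hest : ∀ z v : H, (z, v) ∈ A.graph → ‖z‖ ≤ lam⁻¹ * ‖M z + v‖ := by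
    intro z v hzv
    have h1 : lam * ‖z‖ ^ 2 ≤ (⟪z, M z + v⟫).re := by
      rw [inner_add_right, Complex.add_re]
      have := hMcoer z
      have h2 := hS2 z v hzv
      linarith
    have h2 : (⟪z, M z + v⟫).re ≤ ‖z‖ * ‖M z + v‖ := by
      have := re_inner_le_norm (𝕜 := ℂ) z (M z + v)
      simpa [inner_add_right] using this
    have hlin : lam * ‖z‖ ≤ ‖M z + v‖ := by
      rcases eq_or_lt_of_le (norm_nonneg z) with h0 | h0
      · rw [← h0]; simpa using norm_nonneg (M z + v)
      · nlinarith
    calc ‖z‖ = lam⁻¹ * (lam * ‖z‖) := by field_simp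
    _ ≤ lam⁻¹ * ‖M z + v‖ := mul_le_mul_of_nonneg_left hlin (by positivity)
  have hvest : ∀ z v : H, (z, v) ∈ A.graph → ‖v‖ ≤ (1 + ‖M‖ * lam⁻¹) * ‖M z + v‖ := by
    intro z v hzv
    have h1 : ‖v‖ ≤ ‖M z + v‖ + ‖M z‖ := by
      calc ‖v‖ = ‖(M z + v) - M z‖ := by congr 1; abel
      _ ≤ ‖M z + v‖ + ‖M z‖ := norm_sub_le _ _
    have h2 : ‖M z‖ ≤ ‖M‖ * (lam⁻¹ * ‖M z + v‖) :=
      le_trans (M.le_opNorm z) (mul_le_mul_of_nonneg_left (hest z v hzv) (norm_nonneg _))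
    nlinarith [norm_nonneg (M z + v)]
  have hbound : ∀ p : A.graph, ‖p‖ ≤ (lam⁻¹ + (1 + ‖M‖ * lam⁻¹)).toNNReal * ‖S p‖ := by
    intro p
    have hp : ((p : H × H).1, (p : H × H).2) ∈ A.graph := p.2
    have h0 : 0 ≤ ‖S p‖ := norm_nonneg _
    have h1 : ‖(p : H × H).1‖ ≤ lam⁻¹ * ‖S p‖ := by
      rw [hSapply]; exact hest _ _ hp
    have h2 : ‖(p : H × H).2‖ ≤ (1 + ‖M‖ * lam⁻¹) * ‖S p‖ := by
      rw [hSapply]; exact hvest _ _ hp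
    have hK0 : (0:ℝ) ≤ lam⁻¹ + (1 + ‖M‖ * lam⁻¹) := by positivity
    have hcoe : ((lam⁻¹ + (1 + ‖M‖ * lam⁻¹)).toNNReal : ℝ) = lam⁻¹ + (1 + ‖M‖ * lam⁻¹) :=
      Real.coe_toNNReal _ hK0
    rw [hcoe]
    have hnorm : ‖p‖ = max ‖(p : H × H).1‖ ‖(p : H × H).2‖ := by
      rw [Submodule.coe_norm, Prod.norm_def]
    rw [hnorm]
    have ha : (0:ℝ) ≤ lam⁻¹ := by positivity
    have hb : (0:ℝ) ≤ 1 + ‖M‖ * lam⁻¹ := by positivity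
    apply max_le
    · nlinarith
    · nlinarith
  have hanti := S.antilipschitz_of_bound hbound
  have hclosed_range : IsClosed (Set.range S) := hanti.isClosed_range S.uniformContinuous
  set R : Submodule ℂ H := LinearMap.range S.toLinearMap with hRdef
  have hRset : (R : Set H) = Set.range S := by
    ext f
    simp [hRdef, LinearMap.mem_range, Set.mem_range]
  haveI : CompleteSpace R := by
    have : IsClosed (R : Set H) := hRset ▸ hclosed_range
    exact this.completeSpace_coe
  have hRbot : Rᗮ = ⊥ := by
    rw [Submodule.eq_bot_iff]
    intro g hg
    rw [Submodule.mem_orthogonal] at hg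
    have hgg : (g, ContinuousLinearMap.adjoint M g) ∈ A.graph := by
      apply hS3
      intro u q huq
      have h0 : ⟪M u + q, g⟫ = 0 := hg _ ⟨⟨(u, q), huq⟩, rfl⟩
      have h1 : ⟪g, M u + q⟫ = 0 := by
        rw [← inner_conj_symm, h0, map_zero]
      rw [inner_add_right] at h1
      rw [ContinuousLinearMap.adjoint_inner_left]
      linear_combination h1
    have h2 := hS2 _ _ hgg
    have h3 : ⟪g, ContinuousLinearMap.adjoint M g⟫ = (starRingEnd ℂ) ⟪g, M g⟫ := by
      rw [ContinuousLinearMap.adjoint_inner_right]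
      exact (inner_conj_symm _ _).symm
    have h4 : (⟪g, M g⟫).re = 0 := by
      have h5 := congrArg Complex.re h3
      simp only [Complex.conj_re] at h5
      rw [h2] at h5
      linarith
    have h6 := hMcoer g
    have h7 : ‖g‖ ^ 2 ≤ 0 := by nlinarith
    have h8 : ‖g‖ ^ 2 = 0 := le_antisymm h7 (by positivity)
    have h9 : ‖g‖ = 0 := pow_eq_zero_iff two_ne_zero |>.mp h8
    exact norm_eq_zero.mp h9
  have hRtop : R = ⊤ := Submodule.orthogonal_eq_bot_iff.mp hRbot
  have hexist : ∀ f : H, ∃ zv : H × H, zv ∈ A.graph ∧ M zv.1 + zv.2 = f := by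
    intro f
    have hf : f ∈ R := by rw [hRtop]; trivial
    obtain ⟨p, hp⟩ := hf
    exact ⟨(p : H × H), p.2, hp⟩
  refine ⟨fun f => ?_, ?_⟩
  · obtain ⟨zv, hzv, hf⟩ := hexist f
    refine ⟨zv, ⟨hzv, hf⟩, ?_⟩
    rintro ⟨z', v'⟩ ⟨h', hf'⟩
    obtain ⟨h1, h2⟩ := huniq z' v' zv.1 zv.2 h'
      (by simpa using hzv) (hf'.trans hf.symm)
    exact Prod.ext h1 h2
  -- Part 2
  · intro z v zs vs hzv hzs hMzs
    obtain ⟨Cx, hCx0, hCx⟩ := bddOfWeak x xs hx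
    obtain ⟨CM, hCM0, hCM⟩ : ∃ C : ℝ, 0 ≤ C ∧ ∀ n, ‖Mseq n‖ ≤ C := by
      obtain ⟨C, hC⟩ := banach_steinhaus (g := Mseq) (fun u => by
        obtain ⟨C, _, hC⟩ := bddOfWeak (fun n => Mseq n u) (M u) (fun w => hMconv u w)
        exact ⟨C, hC⟩)
      exact ⟨max C 0, le_max_right _ _, fun n => le_trans (hC n) (le_max_left _ _)⟩
    have hzbd : ∀ n, ‖z n‖ ≤ Cx / lam := by
      intro n
      have h1 : lam * ‖z n‖ ^ 2 ≤ (⟪z n, x n⟫).re := by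
        have h2 := hMn n (z n)
        have h3 : Mseq n (z n) = x n - v n := eq_sub_of_add_eq (hzv n).2
        rw [h3, inner_sub_right, Complex.sub_re] at h2
        have h4 := hS2 _ _ (hzv n).1
        linarith
      have h2 : (⟪z n, x n⟫).re ≤ ‖z n‖ * Cx := by
        have h5 : (⟪z n, x n⟫).re ≤ ‖z n‖ * ‖x n‖ := by
          have := re_inner_le_norm (𝕜 := ℂ) (z n) (x n)
          simpa using this
        exact le_trans h5 (mul_le_mul_of_nonneg_left (hCx n) (norm_nonneg _))
      rw [le_div_iff₀ hlam]
      rcases eq_or_lt_of_le (norm_nonneg (z n)) with h0 | h0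
      · rw [← h0]; simpa using hCx0
      · nlinarith
    have hvbd : ∀ n, ‖v n‖ ≤ Cx + CM * (Cx / lam) := by
      intro n
      have h3 : v n = x n - Mseq n (z n) := by
        rw [← (hzv n).2]; abel
      rw [h3]
      calc ‖x n - Mseq n (z n)‖ ≤ ‖x n‖ + ‖Mseq n (z n)‖ := norm_sub_le _ _
      _ ≤ Cx + CM * (Cx / lam) := by
          have h4 := (Mseq n).le_opNorm (z n)
          have h5 : ‖Mseq n‖ * ‖z n‖ ≤ CM * (Cx / lam) :=
            mul_le_mul (hCM n) (hzbd n) (norm_nonneg _) hCM0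
          exact add_le_add (hCx n) (le_trans h4 h5)
    have hws : ∀ (k : ℕ → ℕ), Tendsto k atTop atTop → ∀ (u : ℕ → H) (ul : H),
        Tendsto u atTop (𝓝 ul) → ∀ w : H,
        Tendsto (fun j => ⟪w, Mseq (k j) (u j)⟫) atTop (𝓝 ⟪w, M ul⟫) := by
      intro k hk u ul hu w
      have h1 : Tendsto (fun j => ⟪w, Mseq (k j) (u j - ul)⟫) atTop (𝓝 0) := by
        have hlim0 : Tendsto (fun j => ‖w‖ * CM * ‖u j - ul‖) atTop (𝓝 0) := by
          have h7 : Tendsto (fun j => ‖u j - ul‖) atTop (𝓝 0) := by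
            simpa using (tendsto_sub_nhds_zero_iff.mpr hu).norm
          have h8 := h7.const_mul (‖w‖ * CM)
          simpa using h8
        refine squeeze_zero_norm (fun j => ?_) hlim0
        calc ‖⟪w, Mseq (k j) (u j - ul)⟫‖ ≤ ‖w‖ * ‖Mseq (k j) (u j - ul)‖ :=
                norm_inner_le_norm _ _
          _ ≤ ‖w‖ * CM * ‖u j - ul‖ := by
              have h6 := le_trans ((Mseq (k j)).le_opNorm (u j - ul))
                (mul_le_mul_of_nonneg_right (hCM (k j)) (norm_nonneg _))
              rw [mul_assoc]
              exact mul_le_mul_of_nonneg_left h6 (norm_nonneg w)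
      have h2 : Tendsto (fun j => ⟪w, Mseq (k j) ul⟫) atTop (𝓝 ⟪w, M ul⟫) :=
        (hMconv ul w).comp hk
      have h3 := h1.add h2
      rw [zero_add] at h3
      refine h3.congr (fun j => ?_)
      rw [← inner_add_right, map_sub]
      congr 1
      abel
    have hzstrong : Tendsto z atTop (𝓝 zs) := by
      apply tendsto_of_subseq_tendsto
      intro ns hns
      obtain ⟨φ, hφ, zlim, hzlim⟩ := hAcpt (z ∘ ns) (v ∘ ns) (fun n => (hzv (ns n)).1)
        ⟨(Cx / lam) ^ 2 + (Cx + CM * (Cx / lam)) ^ 2, fun n => by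
          have h1 := hzbd (ns n); have h2 := hvbd (ns n)
          have h3 := norm_nonneg (z (ns n)); have h4 := norm_nonneg (v (ns n))
          simp only [Function.comp_apply]
          nlinarith⟩
      set k : ℕ → ℕ := ns ∘ φ with hkdef
      have hk : Tendsto k atTop atTop := hns.comp hφ.tendsto_atTop
      have hzk : Tendsto (fun j => z (k j)) atTop (𝓝 zlim) := hzlim
      have hvk : ∀ u : H, Tendsto (fun j => ⟪u, v (k j)⟫) atTop (𝓝 ⟪u, xs - M zlim⟫) := by
        intro u
        have h3 : ∀ j, v (k j) = x (k j) - Mseq (k j) (z (k j)) := fun j => by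
          rw [← (hzv (k j)).2]; abel
        have h4 : Tendsto (fun j => ⟪u, x (k j)⟫ - ⟪u, Mseq (k j) (z (k j))⟫) atTop
            (𝓝 (⟪u, xs⟫ - ⟪u, M zlim⟫)) :=
          ((hx u).comp hk).sub (hws k hk (fun j => z (k j)) zlim hzk u)
        rw [inner_sub_right]
        refine h4.congr (fun j => ?_)
        rw [← inner_sub_right, ← h3 j]
      have hmem : (zlim, xs - M zlim) ∈ A.graph := by
        apply hS3
        intro u q huq
        have hid : ∀ j, ⟪u, v (k j)⟫ = -⟪q, z (k j)⟫ := fun j => by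
          have h5 := hS1 _ _ (hzv (k j)).1 u q huq
          have h6 := congrArg (starRingEnd ℂ) h5
          simpa only [map_neg, inner_conj_symm] using h6
        have hlim : ⟪u, xs - M zlim⟫ = -⟪q, zlim⟫ := by
          have h7 : Tendsto (fun j => ⟪u, v (k j)⟫) atTop (𝓝 (-⟪q, zlim⟫)) := by
            have h8 : Tendsto (fun j => -⟪q, z (k j)⟫) atTop (𝓝 (-⟪q, zlim⟫)) :=
              (Filter.Tendsto.inner tendsto_const_nhds hzk).neg
            exact h8.congr (fun j => (hid j).symm)
          exact tendsto_nhds_unique (hvk u) h7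
        have h9 := congrArg (starRingEnd ℂ) hlim
        simpa only [map_neg, inner_conj_symm] using h9
      have hzeq : zlim = zs := by
        have heq2 : M zlim + (xs - M zlim) = M zs + vs := by rw [hMzs]; abel
        exact (huniq zlim _ zs vs hmem hzs heq2).1
      exact ⟨φ, by rw [← hzeq]; exact hzk⟩
    intro y w hyw
    have h1 : Tendsto (fun n => ⟪y, z n⟫) atTop (𝓝 ⟪y, zs⟫) :=
      Filter.Tendsto.inner tendsto_const_nhds hzstrong
    have h2 : Tendsto (fun n => ⟪w, v n⟫) atTop (𝓝 ⟪w, vs⟫) := by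
      have h3 : ∀ n, v n = x n - Mseq n (z n) := fun n => by
        rw [← (hzv n).2]; abel
      have h4 : vs = xs - M zs := by rw [← hMzs]; abel
      have h5 : Tendsto (fun n => ⟪w, x n⟫ - ⟪w, Mseq n (z n)⟫) atTop
          (𝓝 (⟪w, xs⟫ - ⟪w, M zs⟫)) :=
        (hx w).sub (hws id tendsto_id z zs hzstrong w)
      rw [h4, inner_sub_right]
      refine h5.congr (fun n => ?_)
      rw [← inner_sub_right, ← h3 n]
    exact h1.add h2


end DtNPaper
end
end

section
/- Let m ∈ L(H₀) be a bounded (not necessarily coercive) operator and a ∈ L(H₁) coercive. Let b̊ be the restriction of the form b(u,v) = (aGu, Gv)_{H₁} + (mu, v)_{H₀} to dom(G̊) × dom(G̊), and let T̊ ∈ L(dom(G̊)) be the bounded operator with b̊(u,v) = (T̊u, v)_{dom(G̊)}. Assume ran(T̊) is closed in dom(G̊). Then the domain of the Dirichlet-to-Neumann graph Λ equals { u₀ ∈ BD(G) : (Gu₀, π_{BD(D)} a*Gv)_{BD(D)} = 0 for all v ∈ ker(m* − Da*G̊) }, where ker(m* − Da*G̊) = { v ∈ dom(G̊) : a*G̊v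 ∈ dom(D) and Da*G̊v = m*v }. -/
open Filter Topology

noncomputable section

namespace DtNPaper

local notation "⟪" x ", " y "⟫" => (inner ℂ x y : ℂ)

variable {H₀ H₁ HS : Type*}
  [NormedAddCommGroup H₀] [InnerProductSpace ℂ H₀] [CompleteSpace H₀]
  [NormedAddCommGroup H₁] [InnerProductSpace ℂ H₁] [CompleteSpace H₁]


set_option linter.unusedSectionVars false
set_option linter.unusedVariables false
set_option maxHeartbeats 1000000

section Aux
variable {A B : Type*} [NormedAddCommGroup A] [InnerProductSpace ℂ A] [CompleteSpace A]
  [NormedAddCommGroup B] [InnerProductSpace ℂ B] [CompleteSpace B]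

variable {A B : Type*} [NormedAddCommGroup A] [InnerProductSpace ℂ A] [CompleteSpace A]
  [NormedAddCommGroup B] [InnerProductSpace ℂ B] [CompleteSpace B]

lemma prod_inner_apply' (x y : WithLp 2 (A × B)) :
    ⟪x, y⟫ = ⟪x.fst, y.fst⟫ + ⟪x.snd, y.snd⟫ := rfl

lemma adjGraph_closed (Dop : B →ₗ.[ℂ] A) (Gi : A →ₗ.[ℂ] B)
    (hGi : ∀ u w, (u, w) ∈ Gi.graph ↔ ∀ q s, (q, s) ∈ Dop.graph → ⟪w, q⟫ = -⟪u, s⟫) :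
    IsClosed (Gi.graph : Set (A × B)) := by
  have h : (Gi.graph : Set (A × B)) =
      ⋂ z ∈ (Dop.graph : Set (B × A)), {y : A × B | ⟪y.2, z.1⟫ + ⟪y.1, z.2⟫ = 0} := by
    ext y
    obtain ⟨y1, y2⟩ := y
    simp only [Set.mem_iInter, Set.mem_setOf_eq, SetLike.mem_coe]
    rw [hGi y1 y2]
    constructor
    · rintro h ⟨z1, z2⟩ hz
      have := h z1 z2 hz
      simp only at this ⊢
      linear_combination this
    · intro h q s hqs
      have := h (q, s) hqs
      simp only at this
      linear_combination this
  rw [h]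
  exact isClosed_biInter fun z _ => isClosed_eq
    ((continuous_snd.inner continuous_const).add (continuous_fst.inner continuous_const))
    continuous_const

lemma strong_of_weak' (Dop : B →ₗ.[ℂ] A) (Gi : A →ₗ.[ℂ] B)
    (hD : IsClosed (Dop.graph : Set (B × A)))
    (hGi : ∀ u w, (u, w) ∈ Gi.graph ↔ ∀ q s, (q, s) ∈ Dop.graph → ⟪w, q⟫ = -⟪u, s⟫)
    {q : B} {s : A} (h : ∀ u w, (u, w) ∈ Gi.graph → ⟪w, q⟫ = -⟪u, s⟫) :
    (q, s) ∈ Dop.graph := by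
  set tE := WithLp.prodContinuousLinearEquiv 2 ℂ B A with htE
  set M : Submodule ℂ (WithLp 2 (B × A)) :=
    Dop.graph.comap (tE : WithLp 2 (B × A) →ₗ[ℂ] B × A) with hM
  have hMc : IsClosed (M : Set (WithLp 2 (B × A))) := hD.preimage tE.continuous
  haveI : CompleteSpace M := hMc.completeSpace_coe
  have hz : (tE.symm (q, s)) ∈ Mᗮᗮ := by
    rw [Submodule.mem_orthogonal]
    intro x hx
    rw [Submodule.mem_orthogonal] at hx
    have hGix : (x.snd, x.fst) ∈ Gi.graph := by
      rw [hGi]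
      intro q' s' hq's'
      have hcM : tE.symm (q', s') ∈ M := by
        simp only [hM, Submodule.mem_comap, ContinuousLinearEquiv.coe_coe,
          ContinuousLinearEquiv.apply_symm_apply]
        exact hq's'
      have h0 := hx _ hcM
      rw [prod_inner_apply'] at h0
      have e1 : (tE.symm (q', s')).fst = q' := rfl
      have e2 : (tE.symm (q', s')).snd = s' := rfl
      rw [e1, e2] at h0
      have h1 := congrArg (starRingEnd ℂ) h0
      simp only [map_add, inner_conj_symm, map_zero] at h1
      linear_combination h1
    have h2 := h x.snd x.fst hGix
    rw [prod_inner_apply']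
    have e1 : (tE.symm (q, s)).fst = q := rfl
    have e2 : (tE.symm (q, s)).snd = s := rfl
    rw [e1, e2]
    linear_combination h2
  rwa [Submodule.orthogonal_orthogonal] at hz


lemma exists_bd_decomp (Dop Di : B →ₗ.[ℂ] A) (hle : Di.graph ≤ Dop.graph)
    (hDic : IsClosed (Di.graph : Set (B × A)))
    {x : B} {y : A} (hxy : (x, y) ∈ Dop.graph) :
    ∃ q dq, (q, dq) ∈ Dop.graph ∧ (x - q) ∈ Di.domain ∧ (x - q, y - dq) ∈ Di.graph ∧
      ∀ v w, (v, w) ∈ Di.graph → ⟪v, q⟫ + ⟪w, dq⟫ = 0 := by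
  set tE := WithLp.prodContinuousLinearEquiv 2 ℂ B A with htE
  set Mi : Submodule ℂ (WithLp 2 (B × A)) :=
    Di.graph.comap (tE : WithLp 2 (B × A) →ₗ[ℂ] B × A) with hMi
  have hMic : IsClosed (Mi : Set (WithLp 2 (B × A))) := hDic.preimage tE.continuous
  haveI : CompleteSpace Mi := hMic.completeSpace_coe
  set z : WithLp 2 (B × A) := tE.symm (x, y) with hz
  set zi := (Mi.orthogonalProjectionOnto z : WithLp 2 (B × A)) with hzi
  have hziMi : (zi.fst, zi.snd) ∈ Di.graph := (Mi.orthogonalProjectionOnto z).2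
  refine ⟨x - zi.fst, y - zi.snd, ?_, ?_, ?_, ?_⟩
  · have := Dop.graph.sub_mem hxy (hle hziMi)
    simpa [Prod.mk_sub_mk] using this
  · simp only [sub_sub_cancel]
    exact Di.mem_domain_of_mem_graph hziMi
  · simpa [sub_sub_cancel] using hziMi
  · intro v w hvw
    have hcMi : tE.symm (v, w) ∈ Mi := by
      simp only [hMi, Submodule.mem_comap, ContinuousLinearEquiv.coe_coe,
        ContinuousLinearEquiv.apply_symm_apply]
      exact hvw
    have h0 : ⟪z - zi, tE.symm (v, w)⟫ = 0 :=
      Submodule.starProjection_inner_eq_zero z _ hcMi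
    have h1 := congrArg (starRingEnd ℂ) h0
    rw [inner_conj_symm, map_zero] at h1
    rw [prod_inner_apply'] at h1
    have e1 : (tE.symm (v, w)).fst = v := rfl
    have e2 : (tE.symm (v, w)).snd = w := rfl
    have e3 : (z - zi).fst = x - zi.fst := rfl
    have e4 : (z - zi).snd = y - zi.snd := rfl
    rw [e1, e2, e3, e4] at h1
    exact h1

end Aux

section Aux2
attribute [local instance high] InnerProductSpace.toInner
variable {H₀ H₁ : Type*} [NormedAddCommGroup H₀] [InnerProductSpace ℂ H₀] [CompleteSpace H₀]
  [NormedAddCommGroup H₁] [InnerProductSpace ℂ H₁] [CompleteSpace H₁]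

lemma solvability
    (G Gi : H₀ →ₗ.[ℂ] H₁) (D : H₁ →ₗ.[ℂ] H₀)
    (hDclosed : IsClosed (D.graph : Set (H₁ × H₀)))
    (hGi : ∀ u w, (u, w) ∈ Gi.graph ↔ ∀ q s, (q, s) ∈ D.graph → ⟪w, q⟫ = -⟪u, s⟫)
    (hGic : IsClosed (Gi.graph : Set (H₀ × H₁)))
    (a : H₁ →L[ℂ] H₁) (m : H₀ →L[ℂ] H₀)
    (T0 : H₀ → H₀) (T0G : H₀ → H₁)
    (hT0mem : ∀ u w, (u, w) ∈ Gi.graph → (T0 u, T0G u) ∈ Gi.graph)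
    (hT0form : ∀ u w v s, (u, w) ∈ Gi.graph → (v, s) ∈ Gi.graph →
      ⟪s, a w⟫ + ⟪v, m u⟫ = ⟪v, T0 u⟫ + ⟪s, T0G u⟫)
    (hT0ran : IsClosed {z : H₀ × H₁ | ∃ u w, (u, w) ∈ Gi.graph ∧ z = (T0 u, T0G u)})
    (u₀ : H₀) (p₀ : H₁)
    (hO : ∀ v w, (v, w) ∈ Gi.graph →
      ((ContinuousLinearMap.adjoint a) w, (ContinuousLinearMap.adjoint m) v) ∈ D.graph →
      ⟪v, m u₀⟫ + ⟪w, a p₀⟫ = 0) :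
    ∃ u1 s1, (u1, s1) ∈ Gi.graph ∧ (a (p₀ + s1), m (u₀ + u1)) ∈ D.graph := by
  set tE := WithLp.prodContinuousLinearEquiv 2 ℂ H₀ H₁ with htE
  set K : Submodule ℂ (WithLp 2 (H₀ × H₁)) :=
    Gi.graph.comap (tE : WithLp 2 (H₀ × H₁) →ₗ[ℂ] H₀ × H₁) with hK
  have memK : ∀ x : WithLp 2 (H₀ × H₁), x ∈ K ↔ (x.fst, x.snd) ∈ Gi.graph :=
    fun x => Iff.rfl
  have hKc : IsClosed (K : Set (WithLp 2 (H₀ × H₁))) := hGic.preimage tE.continuous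
  haveI : CompleteSpace K := hKc.completeSpace_coe
  -- the operator
  set Tfun : K → K := fun x =>
    ⟨tE.symm (T0 (x : WithLp 2 (H₀ × H₁)).fst, T0G (x : WithLp 2 (H₀ × H₁)).fst),
      (memK _).mpr (hT0mem _ _ ((memK _).mp x.2))⟩ with hTfun
  have hTK : ∀ v x : K, (inner ℂ v (Tfun x) : ℂ) =
      ⟪(v : WithLp 2 (H₀ × H₁)).snd, a (x : WithLp 2 (H₀ × H₁)).snd⟫ +
      ⟪(v : WithLp 2 (H₀ × H₁)).fst, m (x : WithLp 2 (H₀ × H₁)).fst⟫ := by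
    intro v x
    rw [Submodule.coe_inner, prod_inner_apply']
    have e1 : ((Tfun x : K) : WithLp 2 (H₀ × H₁)).fst = T0 (x : WithLp 2 (H₀ × H₁)).fst := rfl
    have e2 : ((Tfun x : K) : WithLp 2 (H₀ × H₁)).snd = T0G (x : WithLp 2 (H₀ × H₁)).fst := rfl
    rw [e1, e2]
    exact (hT0form _ _ _ _ ((memK _).mp x.2) ((memK _).mp v.2)).symm
  have hadd : ∀ x x' : K, Tfun (x + x') = Tfun x + Tfun x' := by
    intro x x'
    apply ext_inner_left ℂ
    intro v
    rw [inner_add_right, hTK v (x + x'), hTK v x, hTK v x']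
    have e1 : ((x + x' : K) : WithLp 2 (H₀ × H₁)).fst
        = (x : WithLp 2 (H₀ × H₁)).fst + (x' : WithLp 2 (H₀ × H₁)).fst := rfl
    have e2 : ((x + x' : K) : WithLp 2 (H₀ × H₁)).snd
        = (x : WithLp 2 (H₀ × H₁)).snd + (x' : WithLp 2 (H₀ × H₁)).snd := rfl
    rw [e1, e2, map_add, map_add, inner_add_right, inner_add_right]
    ring
  have hsmul : ∀ (c : ℂ) (x : K), Tfun (c • x) = c • Tfun x := by
    intro c x
    apply ext_inner_left ℂ
    intro v
    rw [inner_smul_right (𝕜 := ℂ) (E := K), hTK v (c • x), hTK v x]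
    have e1 : ((c • x : K) : WithLp 2 (H₀ × H₁)).fst
        = c • (x : WithLp 2 (H₀ × H₁)).fst := rfl
    have e2 : ((c • x : K) : WithLp 2 (H₀ × H₁)).snd
        = c • (x : WithLp 2 (H₀ × H₁)).snd := rfl
    rw [e1, e2, map_smul, map_smul, inner_smul_right, inner_smul_right]
    ring
  set Tl : K →ₗ[ℂ] K :=
    { toFun := Tfun, map_add' := hadd, map_smul' := hsmul } with hTl
  have hfst_le : ∀ t : WithLp 2 (H₀ × H₁), ‖t.fst‖ ≤ ‖t‖ := by
    intro t
    have h := WithLp.prod_norm_sq_eq_of_L2 t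
    refine le_of_pow_le_pow_left₀ two_ne_zero (norm_nonneg t) ?_
    nlinarith [norm_nonneg t.snd]
  have hsnd_le : ∀ t : WithLp 2 (H₀ × H₁), ‖t.snd‖ ≤ ‖t‖ := by
    intro t
    have h := WithLp.prod_norm_sq_eq_of_L2 t
    refine le_of_pow_le_pow_left₀ two_ne_zero (norm_nonneg t) ?_
    nlinarith [norm_nonneg t.fst]
  have hbound : ∀ x : K, ‖Tl x‖ ≤ (‖a‖ + ‖m‖) * ‖x‖ := by
    intro x
    have hTlx : Tl x = Tfun x := rfl
    rw [hTlx]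
    rcases eq_or_ne (Tfun x) 0 with h0 | h0
    · rw [h0, norm_zero]
      positivity
    · have hn : (0:ℝ) < ‖Tfun x‖ := norm_pos_iff.mpr h0
      have h1 : (‖Tfun x‖ : ℝ) ^ 2 ≤ ‖(inner ℂ (Tfun x) (Tfun x) : ℂ)‖ := by
        rw [← inner_self_eq_norm_sq (𝕜 := ℂ) (Tfun x)]
        exact RCLike.re_le_norm _
      rw [hTK (Tfun x) x] at h1
      have h2 : ‖(⟪((Tfun x : K) : WithLp 2 (H₀ × H₁)).snd, a (x : WithLp 2 (H₀ × H₁)).snd⟫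
          + ⟪((Tfun x : K) : WithLp 2 (H₀ × H₁)).fst, m (x : WithLp 2 (H₀ × H₁)).fst⟫)‖
          ≤ ‖Tfun x‖ * (‖a‖ * ‖x‖) + ‖Tfun x‖ * (‖m‖ * ‖x‖) := by
        refine (norm_add_le _ _).trans (add_le_add ?_ ?_)
        · refine (norm_inner_le_norm _ _).trans ?_
          have c1 : ‖((Tfun x : K) : WithLp 2 (H₀ × H₁)).snd‖ ≤ ‖Tfun x‖ := hsnd_le _
          have c2 : ‖a (x : WithLp 2 (H₀ × H₁)).snd‖ ≤ ‖a‖ * ‖x‖ :=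
            (a.le_opNorm _).trans (by
              have := hsnd_le (x : WithLp 2 (H₀ × H₁))
              have hx : ‖(x : WithLp 2 (H₀ × H₁))‖ = ‖x‖ := rfl
              nlinarith [norm_nonneg a, norm_nonneg (x : WithLp 2 (H₀ × H₁)).snd])
          exact mul_le_mul c1 c2 (norm_nonneg _) (norm_nonneg _)
        · refine (norm_inner_le_norm _ _).trans ?_
          have c1 : ‖((Tfun x : K) : WithLp 2 (H₀ × H₁)).fst‖ ≤ ‖Tfun x‖ := hfst_le _
          have c2 : ‖m (x : WithLp 2 (H₀ × H₁)).fst‖ ≤ ‖m‖ * ‖x‖ :=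
            (m.le_opNorm _).trans (by
              have := hfst_le (x : WithLp 2 (H₀ × H₁))
              have hx : ‖(x : WithLp 2 (H₀ × H₁))‖ = ‖x‖ := rfl
              nlinarith [norm_nonneg m, norm_nonneg (x : WithLp 2 (H₀ × H₁)).fst])
          exact mul_le_mul c1 c2 (norm_nonneg _) (norm_nonneg _)
      nlinarith [h1.trans h2]
  set Tc : K →L[ℂ] K := Tl.mkContinuous (‖a‖ + ‖m‖) hbound with hTc
  have hTcx : ∀ x : K, Tc x = Tfun x := fun x => rfl
  set Tad := ContinuousLinearMap.adjoint Tc with hTad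
  -- kernel characterization
  have hker : ∀ y : K, Tad y = 0 ↔
      ((ContinuousLinearMap.adjoint a) (y : WithLp 2 (H₀ × H₁)).snd,
       (ContinuousLinearMap.adjoint m) (y : WithLp 2 (H₀ × H₁)).fst) ∈ D.graph := by
    intro y
    constructor
    · intro hy
      apply strong_of_weak' D Gi hDclosed hGi
      intro u w huw
      set y' : K := ⟨tE.symm (u, w), (memK _).mpr huw⟩ with hy'
      have h0 : (inner ℂ (Tc y') y : ℂ) = 0 := by
        rw [← ContinuousLinearMap.adjoint_inner_right Tc y' y, hy, inner_zero_right]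
      have h0' : (inner ℂ y (Tc y') : ℂ) = 0 := by
        rw [inner_eq_zero_symm] at h0; exact h0
      rw [hTcx, hTK y y'] at h0'
      have e1 : ((y' : K) : WithLp 2 (H₀ × H₁)).fst = u := rfl
      have e2 : ((y' : K) : WithLp 2 (H₀ × H₁)).snd = w := rfl
      rw [e1, e2] at h0'
      rw [← ContinuousLinearMap.adjoint_inner_left a, ← ContinuousLinearMap.adjoint_inner_left m]
        at h0'
      have h1 := congrArg (starRingEnd ℂ) h0'
      simp only [map_add, inner_conj_symm, map_zero] at h1
      linear_combination h1
    · intro hmem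
      apply ext_inner_left ℂ
      intro x
      rw [inner_zero_right, ContinuousLinearMap.adjoint_inner_right]
      rw [inner_eq_zero_symm]
      rw [hTcx, hTK y x]
      have h1 := (hGi _ _).mp ((memK _).mp x.2) _ _ hmem
      have h2 := congrArg (starRingEnd ℂ) h1
      simp only [inner_conj_symm, map_neg] at h2
      rw [ContinuousLinearMap.adjoint_inner_left a, ContinuousLinearMap.adjoint_inner_left m] at h2
      linear_combination h2
  -- closed range
  have hSrc : IsClosed ((LinearMap.range (Tc : K →ₗ[ℂ] K)) : Set K) := by
    have hset : ((LinearMap.range (Tc : K →ₗ[ℂ] K)) : Set K) =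
        (fun x : K => tE (x : WithLp 2 (H₀ × H₁))) ⁻¹'
          {z : H₀ × H₁ | ∃ u w, (u, w) ∈ Gi.graph ∧ z = (T0 u, T0G u)} := by
      ext x
      simp only [Set.mem_preimage, SetLike.mem_coe, LinearMap.mem_range,
        ContinuousLinearMap.coe_coe, Set.mem_setOf_eq]
      constructor
      · rintro ⟨y, rfl⟩
        exact ⟨(y : WithLp 2 (H₀ × H₁)).fst, (y : WithLp 2 (H₀ × H₁)).snd,
          (memK _).mp y.2, rfl⟩
      · rintro ⟨u, w, hmemuw, heq⟩
        refine ⟨⟨tE.symm (u, w), (memK _).mpr hmemuw⟩, ?_⟩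
        apply Subtype.ext
        apply tE.injective
        exact heq.symm
    rw [hset]
    exact hT0ran.preimage (tE.continuous.comp continuous_subtype_val)
  haveI : CompleteSpace (LinearMap.range (Tc : K →ₗ[ℂ] K)) := hSrc.completeSpace_coe
  have horthrange : LinearMap.range (Tc : K →ₗ[ℂ] K) = (LinearMap.ker (Tad : K →ₗ[ℂ] K))ᗮ := by
    have h1 : (LinearMap.range (Tc : K →ₗ[ℂ] K))ᗮ = LinearMap.ker (Tad : K →ₗ[ℂ] K) := by
      ext y
      rw [Submodule.mem_orthogonal, LinearMap.mem_ker]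
      constructor
      · intro hy
        apply ext_inner_left ℂ
        intro x
        rw [inner_zero_right, ContinuousLinearMap.coe_coe, ContinuousLinearMap.adjoint_inner_right]
        exact hy _ ⟨x, rfl⟩
      · rintro hy x ⟨x', rfl⟩
        simp only [ContinuousLinearMap.coe_coe] at hy ⊢
        rw [← ContinuousLinearMap.adjoint_inner_right, ← hTad, hy, inner_zero_right]
    rw [← h1, Submodule.orthogonal_orthogonal]
  -- the data vector
  set F₀ : WithLp 2 (H₀ × H₁) := tE.symm (m u₀, a p₀) with hF₀
  set f : K := K.orthogonalProjectionOnto F₀ with hf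
  have hfK : ∀ y : K, (inner ℂ y f : ℂ) =
      ⟪(y : WithLp 2 (H₀ × H₁)).fst, m u₀⟫ + ⟪(y : WithLp 2 (H₀ × H₁)).snd, a p₀⟫ := by
    intro y
    have h0 : (inner ℂ (F₀ - (f : WithLp 2 (H₀ × H₁))) (y : WithLp 2 (H₀ × H₁)) : ℂ) = 0 :=
      Submodule.starProjection_inner_eq_zero F₀ _ y.2
    have h0' : (inner ℂ (y : WithLp 2 (H₀ × H₁)) (F₀ - (f : WithLp 2 (H₀ × H₁))) : ℂ) = 0 := by
      rw [inner_eq_zero_symm] at h0; exact h0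
    rw [inner_sub_right, sub_eq_zero] at h0'
    rw [Submodule.coe_inner, ← h0', prod_inner_apply']
    have e1 : (F₀ : WithLp 2 (H₀ × H₁)).fst = m u₀ := rfl
    have e2 : (F₀ : WithLp 2 (H₀ × H₁)).snd = a p₀ := rfl
    rw [e1, e2]
  have hfmem : f ∈ LinearMap.range (Tc : K →ₗ[ℂ] K) := by
    rw [horthrange, Submodule.mem_orthogonal]
    intro y hy
    rw [LinearMap.mem_ker] at hy
    have hDy := (hker y).mp hy
    have h1 := hO _ _ ((memK _).mp y.2) hDy
    rw [hfK y]
    linear_combination h1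
  obtain ⟨x, hx⟩ := hfmem
  refine ⟨((-x : K) : WithLp 2 (H₀ × H₁)).fst, ((-x : K) : WithLp 2 (H₀ × H₁)).snd,
    (memK _).mp (-x : K).2, ?_⟩
  apply strong_of_weak' D Gi hDclosed hGi
  intro v w hvw
  set y : K := ⟨tE.symm (v, w), (memK _).mpr hvw⟩ with hy
  have hx' : Tc x = f := hx
  have h2 : (inner ℂ y (Tfun (-x)) : ℂ) = (inner ℂ y (-f) : ℂ) := by
    rw [← hTcx, map_neg, hx']
  rw [hTK y (-x), inner_neg_right, hfK y] at h2
  have e1 : ((y : K) : WithLp 2 (H₀ × H₁)).fst = v := rfl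
  have e2 : ((y : K) : WithLp 2 (H₀ × H₁)).snd = w := rfl
  rw [e1, e2] at h2
  rw [map_add, map_add, inner_add_right, inner_add_right]
  linear_combination h2

end Aux2

/-- Proposition 5.3: if `ran T̊` is closed in `dom G̊`, then the domain of the
Dirichlet-to-Neumann graph `Λ` equals the set of `u₀ ∈ BD(G)` such that
`(G u₀, π_{BD(D)} a* G v)_{BD(D)} = 0` for all `v ∈ ker (m* - D a* G̊)`. -/
theorem statement16
    (G Gi : H₀ →ₗ.[ℂ] H₁) (D Di : H₁ →ₗ.[ℂ] H₀)
    (hGdense : Dense (G.domain : Set H₀)) (hDdense : Dense (D.domain : Set H₁))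
    (hGclosed : IsClosed (G.graph : Set (H₀ × H₁)))
    (hDclosed : IsClosed (D.graph : Set (H₁ × H₀)))
    (hGi : ∀ u w, (u, w) ∈ Gi.graph ↔ ∀ q s, (q, s) ∈ D.graph → ⟪w, q⟫ = -⟪u, s⟫)
    (hDi : ∀ q w, (q, w) ∈ Di.graph ↔ ∀ u p, (u, p) ∈ G.graph → ⟪w, u⟫ = -⟪q, p⟫)
    (hGiG : Gi.graph ≤ G.graph) (hDiD : Di.graph ≤ D.graph)
    (a : H₁ →L[ℂ] H₁) (m : H₀ →L[ℂ] H₀) (ha : Coercive a)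
    (T0 : H₀ → H₀) (T0G : H₀ → H₁)
    (hT0mem : ∀ u w, (u, w) ∈ Gi.graph → (T0 u, T0G u) ∈ Gi.graph)
    (hT0form : ∀ u w v s, (u, w) ∈ Gi.graph → (v, s) ∈ Gi.graph →
      ⟪s, a w⟫ + ⟪v, m u⟫ = ⟪v, T0 u⟫ + ⟪s, T0G u⟫)
    (hT0ran : IsClosed
      {z : H₀ × H₁ | ∃ u w, (u, w) ∈ Gi.graph ∧ z = (T0 u, T0G u)}) :
    ∀ u₀ : H₀,
      (∃ q₀, (u₀, q₀) ∈ dtnGraph G Gi D Di a m) ↔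
      (memBD G Gi u₀ ∧
        ∀ v w q dq p dp, (v, w) ∈ Gi.graph →
          ((ContinuousLinearMap.adjoint a) w,
            (ContinuousLinearMap.adjoint m) v) ∈ D.graph →
          memBD D Di q → (ContinuousLinearMap.adjoint a) w - q ∈ Di.domain →
          (q, dq) ∈ D.graph → (u₀, p) ∈ G.graph → (p, dp) ∈ D.graph →
          ⟪q, p⟫ + ⟪dq, dp⟫ = 0) := by
  have hGicl : IsClosed (Gi.graph : Set (H₀ × H₁)) := adjGraph_closed D Gi hGi
  have hDicl : IsClosed (Di.graph : Set (H₁ × H₀)) := adjGraph_closed G Di hDi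
  intro u₀
  constructor
  · rintro ⟨q₀, u, p, huG, hDmem, hBDu, hudom, hBDq, hqdom⟩
    obtain ⟨p₀, h0x, horthx⟩ := hBDu
    have h0 : (u₀, p₀) ∈ G.graph := h0x
    have horth : ∀ v w, (v, w) ∈ Gi.graph → ⟪v, u₀⟫ + ⟪w, p₀⟫ = 0 := horthx
    refine ⟨⟨p₀, h0, horth⟩, ?_⟩
    intro v w q dq p' dp hvw hkerv hqBD hqdomv hqD hu₀p' hp'D
    have hDp0 : (p₀, u₀) ∈ D.graph := by
      apply strong_of_weak' D Gi hDclosed hGi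
      intro v' w' hv'w'
      have h := horth v' w' hv'w'
      linear_combination h
    have hp'eq : p' = p₀ := G.mem_graph_snd_inj hu₀p' h0 rfl
    rw [hp'eq] at hp'D ⊢
    have hdp : dp = u₀ := D.mem_graph_snd_inj hp'D hDp0 rfl
    rw [hdp]
    have hsub : (u - u₀, p - p₀) ∈ G.graph := by
      have h := G.graph.sub_mem huG h0
      simpa [Prod.mk_sub_mk] using h
    have huGi : (u - u₀, p - p₀) ∈ Gi.graph := by
      have hg := Gi.mem_graph ⟨u - u₀, hudom⟩
      have hgG := hGiG hg
      have he : Gi ⟨u - u₀, hudom⟩ = p - p₀ := G.mem_graph_snd_inj hgG hsub rfl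
      rwa [he] at hg
    have heD : ((ContinuousLinearMap.adjoint a) w - q,
        (ContinuousLinearMap.adjoint m) v - dq) ∈ D.graph := by
      have h := D.graph.sub_mem hkerv hqD
      simpa [Prod.mk_sub_mk] using h
    have heDi : ((ContinuousLinearMap.adjoint a) w - q,
        (ContinuousLinearMap.adjoint m) v - dq) ∈ Di.graph := by
      have hg := Di.mem_graph ⟨(ContinuousLinearMap.adjoint a) w - q, hqdomv⟩
      have hgD := hDiD hg
      have he : Di ⟨(ContinuousLinearMap.adjoint a) w - q, hqdomv⟩
          = (ContinuousLinearMap.adjoint m) v - dq := D.mem_graph_snd_inj hgD heD rfl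
      rwa [he] at hg
    have h1 : ⟪(ContinuousLinearMap.adjoint m) v - dq, u₀⟫
        = -⟪(ContinuousLinearMap.adjoint a) w - q, p₀⟫ := (hDi _ _).mp heDi _ _ h0
    have h2 : ⟪w, a p⟫ = -⟪v, m u⟫ := (hGi _ _).mp hvw _ _ hDmem
    have h3 : ⟪p - p₀, (ContinuousLinearMap.adjoint a) w⟫
        = -⟪u - u₀, (ContinuousLinearMap.adjoint m) v⟫ := (hGi _ _).mp huGi _ _ hkerv
    have h3' := congrArg (starRingEnd ℂ) h3
    simp only [inner_conj_symm, map_neg] at h3'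
    rw [ContinuousLinearMap.adjoint_inner_left a, ContinuousLinearMap.adjoint_inner_left m] at h3'
    rw [map_sub, map_sub] at h3'
    have e7 : ⟪w, a p - a p₀⟫ = ⟪w, a p⟫ - ⟪w, a p₀⟫ := inner_sub_right _ _ _
    have e8 : ⟪v, m u - m u₀⟫ = ⟪v, m u⟫ - ⟪v, m u₀⟫ := inner_sub_right _ _ _
    rw [e7, e8] at h3'
    have e1 : ⟪(ContinuousLinearMap.adjoint m) v - dq, u₀⟫
        = ⟪(ContinuousLinearMap.adjoint m) v, u₀⟫ - ⟪dq, u₀⟫ := inner_sub_left _ _ _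
    have e2 : ⟪(ContinuousLinearMap.adjoint a) w - q, p₀⟫
        = ⟪(ContinuousLinearMap.adjoint a) w, p₀⟫ - ⟪q, p₀⟫ := inner_sub_left _ _ _
    have e3 : ⟪(ContinuousLinearMap.adjoint m) v, u₀⟫ = ⟪v, m u₀⟫ :=
      ContinuousLinearMap.adjoint_inner_left m u₀ v
    have e4 : ⟪(ContinuousLinearMap.adjoint a) w, p₀⟫ = ⟪w, a p₀⟫ :=
      ContinuousLinearMap.adjoint_inner_left a p₀ w
    linear_combination -h1 + e1 + e2 + e3 + e4 + h2 - h3'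
  · rintro ⟨⟨p₀, h0, horth⟩, hcond⟩
    have hDp0 : (p₀, u₀) ∈ D.graph := by
      apply strong_of_weak' D Gi hDclosed hGi
      intro v w hvw
      have h := horth v w hvw
      linear_combination h
    have hO' : ∀ v w, (v, w) ∈ Gi.graph →
        ((ContinuousLinearMap.adjoint a) w, (ContinuousLinearMap.adjoint m) v) ∈ D.graph →
        ⟪v, m u₀⟫ + ⟪w, a p₀⟫ = 0 := by
      intro v w hvw hkerv
      obtain ⟨q, dq, hqD, hqdom, hqdiff, hortq⟩ := exists_bd_decomp D Di hDiD hDicl hkerv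
      have hz := hcond v w q dq p₀ u₀ hvw hkerv ⟨dq, hqD, hortq⟩ hqdom hqD h0 hDp0
      have h1 : ⟪(ContinuousLinearMap.adjoint m) v - dq, u₀⟫
          = -⟪(ContinuousLinearMap.adjoint a) w - q, p₀⟫ := (hDi _ _).mp hqdiff _ _ h0
      have e1 : ⟪(ContinuousLinearMap.adjoint a) w - q, p₀⟫
          = ⟪(ContinuousLinearMap.adjoint a) w, p₀⟫ - ⟪q, p₀⟫ := inner_sub_left _ _ _
      have e2 : ⟪(ContinuousLinearMap.adjoint m) v - dq, u₀⟫
          = ⟪(ContinuousLinearMap.adjoint m) v, u₀⟫ - ⟪dq, u₀⟫ := inner_sub_left _ _ _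
      have e3 : ⟪(ContinuousLinearMap.adjoint m) v, u₀⟫ = ⟪v, m u₀⟫ :=
        ContinuousLinearMap.adjoint_inner_left m u₀ v
      have e4 : ⟪(ContinuousLinearMap.adjoint a) w, p₀⟫ = ⟪w, a p₀⟫ :=
        ContinuousLinearMap.adjoint_inner_left a p₀ w
      linear_combination hz + h1 - e1 - e2 - e3 - e4
    obtain ⟨u1, s1, hu1Gi, hstrong⟩ :=
      solvability G Gi D hDclosed hGi hGicl a m T0 T0G hT0mem hT0form hT0ran u₀ p₀ hO'
    have huG : (u₀ + u1, p₀ + s1) ∈ G.graph := G.graph.add_mem h0 (hGiG hu1Gi)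
    obtain ⟨q₀, dq₀, hq₀D, hq₀dom, hq₀diff, hortq₀⟩ :=
      exists_bd_decomp D Di hDiD hDicl hstrong
    refine ⟨q₀, u₀ + u1, p₀ + s1, huG, hstrong, ⟨p₀, h0, horth⟩, ?_,
      ⟨dq₀, hq₀D, hortq₀⟩, hq₀dom⟩
    show u₀ + u1 - u₀ ∈ Gi.domain
    rw [add_sub_cancel_left]
    exact Gi.mem_domain_of_mem_graph hu1Gi

end DtNPaper
end
end

section
/- Let m ∈ L(H₀) be bounded and a ∈ L(H₁) coercive, and let T ∈ L(dom(G)) be the bounded operator with (Tu, v)_{dom(G)} = (aGu, Gv)_{H₁} + (mu, v)_{H₀} for all u, v ∈ dom(G). Assume ran(T) is closed in dom(G). Then the domain of the inverse Dirichlet-to-Neumann graph Λ^{-1} equals { q₀ ∈ BD(D) : (Dq₀, π_{BD(G)}v)_{BD(G)} = 0 for all v ∈ ker(m* − D̊a*G) }, where ker(m* − D̊a*G) = { v ∈ dom(G) : a*Gv ∈ dom(D̊) and D̊a*Gv = m*v }. -/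
open Filter Topology

noncomputable section

namespace DtNPaper

local notation "⟪" x ", " y "⟫" => (inner ℂ x y : ℂ)

variable {H₀ H₁ HS : Type*}
  [NormedAddCommGroup H₀] [InnerProductSpace ℂ H₀] [CompleteSpace H₀]
  [NormedAddCommGroup H₁] [InnerProductSpace ℂ H₁] [CompleteSpace H₁]

section Helpers

variable {E F : Type*} [NormedAddCommGroup E] [InnerProductSpace ℂ E]
  [NormedAddCommGroup F] [InnerProductSpace ℂ F]

lemma fst_mem_domain {f : E →ₗ.[ℂ] F} {z : E × F} (h : z ∈ f.graph) : z.1 ∈ f.domain := by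
  rcases f.mem_graph_iff.1 h with ⟨x, hx, -⟩
  exact hx ▸ x.2

lemma graph_closed_of_char (f : E →ₗ.[ℂ] F) (D : F →ₗ.[ℂ] E)
    (h : ∀ u w, (u, w) ∈ f.graph ↔ ∀ q s, (q, s) ∈ D.graph → ⟪w, q⟫ = -⟪u, s⟫) :
    IsClosed (f.graph : Set (E × F)) := by
  have hset : (f.graph : Set (E × F)) =
      ⋂ (qs : F × E) (_ : qs ∈ D.graph), {z : E × F | ⟪z.2, qs.1⟫ = -⟪z.1, qs.2⟫} := by
    ext z
    simp only [Set.mem_iInter, Set.mem_setOf_eq, SetLike.mem_coe]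
    constructor
    · intro hz qs hqs
      exact (h z.1 z.2).1 (by simpa using hz) qs.1 qs.2 (by simpa using hqs)
    · intro hz
      have := (h z.1 z.2).2 (fun q s hqs => hz (q, s) hqs)
      simpa using this
  rw [hset]
  refine isClosed_iInter fun qs => isClosed_iInter fun _ => isClosed_eq ?_ ?_
  · exact continuous_snd.inner continuous_const
  · exact (continuous_fst.inner continuous_const).neg

variable [CompleteSpace E] [CompleteSpace F]

lemma mem_of_biorthogonal (S : Submodule ℂ (E × F)) (hS : IsClosed (S : Set (E × F)))
    (z : E × F)
    (h : ∀ w : E × F, (∀ s ∈ S, ⟪s.1, w.1⟫ + ⟪s.2, w.2⟫ = 0) →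
      ⟪w.1, z.1⟫ + ⟪w.2, z.2⟫ = 0) :
    z ∈ S := by
  let e := WithLp.prodContinuousLinearEquiv 2 ℂ E F
  let S' : Submodule ℂ (WithLp 2 (E × F)) :=
    S.comap (e.toLinearEquiv : WithLp 2 (E × F) →ₗ[ℂ] E × F)
  have hS' : IsClosed (S' : Set (WithLp 2 (E × F))) := hS.preimage e.continuous
  haveI : CompleteSpace S' := hS'.completeSpace_coe
  have key : e.symm z ∈ S'ᗮᗮ := by
    rw [Submodule.mem_orthogonal]
    intro w hw
    have hw' : ∀ s ∈ S, ⟪s.1, (e w).1⟫ + ⟪s.2, (e w).2⟫ = 0 := by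
      intro s hs
      have hs' : e.symm s ∈ S' := by
        simp only [S', Submodule.mem_comap]
        show e (e.symm s) ∈ S
        simpa using hs
      have h0 := (Submodule.mem_orthogonal S' w).1 hw _ hs'
      rw [WithLp.prod_inner_apply] at h0
      exact h0
    have h1 := h (e w) hw'
    rw [WithLp.prod_inner_apply]
    exact h1
  rw [Submodule.orthogonal_orthogonal] at key
  have : e (e.symm z) ∈ S := key
  simpa using this

lemma exists_proj (S : Submodule ℂ (E × F)) (hS : IsClosed (S : Set (E × F)))
    (z : E × F) :
    ∃ y, y ∈ S ∧ ∀ s ∈ S, ⟪s.1, z.1 - y.1⟫ + ⟪s.2, z.2 - y.2⟫ = 0 := by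
  let e := WithLp.prodContinuousLinearEquiv 2 ℂ E F
  let S' : Submodule ℂ (WithLp 2 (E × F)) :=
    S.comap (e.toLinearEquiv : WithLp 2 (E × F) →ₗ[ℂ] E × F)
  have hS' : IsClosed (S' : Set (WithLp 2 (E × F))) := hS.preimage e.continuous
  haveI : CompleteSpace S' := hS'.completeSpace_coe
  obtain ⟨y', hy', w', hw', hzyw⟩ := Submodule.exists_add_mem_mem_orthogonal (K := S') (e.symm z)
  have hz : z = e y' + e w' := by
    have : e (e.symm z) = e (y' + w') := congrArg e hzyw
    simpa using this
  refine ⟨e y', hy', ?_⟩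
  intro s hs
  have hs' : e.symm s ∈ S' := by
    simp only [S', Submodule.mem_comap]
    show e (e.symm s) ∈ S
    simpa using hs
  have h0 := (Submodule.mem_orthogonal S' w').1 hw' _ hs'
  rw [WithLp.prod_inner_apply] at h0
  have h1 : z.1 - (e y').1 = (e w').1 := by rw [hz]; simp
  have h2 : z.2 - (e y').2 = (e w').2 := by rw [hz]; simp
  rw [h1, h2]
  exact h0

end Helpers

/-- Proposition 5.7: if `ran T` is closed in `dom G`, then the domain of the
inverse Dirichlet-to-Neumann graph `Λ⁻¹` equals the set of `q₀ ∈ BD(D)` such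
that `(D q₀, π_{BD(G)} v)_{BD(G)} = 0` for all `v ∈ ker (m* - D̊ a* G)`. -/
theorem statement18
    (G Gi : H₀ →ₗ.[ℂ] H₁) (D Di : H₁ →ₗ.[ℂ] H₀)
    (hGdense : Dense (G.domain : Set H₀)) (hDdense : Dense (D.domain : Set H₁))
    (hGclosed : IsClosed (G.graph : Set (H₀ × H₁)))
    (hDclosed : IsClosed (D.graph : Set (H₁ × H₀)))
    (hGi : ∀ u w, (u, w) ∈ Gi.graph ↔ ∀ q s, (q, s) ∈ D.graph → ⟪w, q⟫ = -⟪u, s⟫)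
    (hDi : ∀ q w, (q, w) ∈ Di.graph ↔ ∀ u p, (u, p) ∈ G.graph → ⟪w, u⟫ = -⟪q, p⟫)
    (hGiG : Gi.graph ≤ G.graph) (hDiD : Di.graph ≤ D.graph)
    (a : H₁ →L[ℂ] H₁) (m : H₀ →L[ℂ] H₀) (ha : Coercive a)
    (T1 : H₀ → H₀) (T1G : H₀ → H₁)
    (hT1mem : ∀ u w, (u, w) ∈ G.graph → (T1 u, T1G u) ∈ G.graph)
    (hT1form : ∀ u w v s, (u, w) ∈ G.graph → (v, s) ∈ G.graph →
      ⟪s, a w⟫ + ⟪v, m u⟫ = ⟪v, T1 u⟫ + ⟪s, T1G u⟫)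
    (hT1ran : IsClosed
      {z : H₀ × H₁ | ∃ u w, (u, w) ∈ G.graph ∧ z = (T1 u, T1G u)}) :
    ∀ q₀ : H₁,
      (∃ u₀, (u₀, q₀) ∈ dtnGraph G Gi D Di a m) ↔
      (memBD D Di q₀ ∧
        ∀ v t, (v, t) ∈ G.graph →
          ((ContinuousLinearMap.adjoint a) t,
            (ContinuousLinearMap.adjoint m) v) ∈ Di.graph →
          ∀ v₀ t₀ s gs, memBD G Gi v₀ → v - v₀ ∈ Gi.domain →
            (v₀, t₀) ∈ G.graph → (q₀, s) ∈ D.graph → (s, gs) ∈ G.graph →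
            ⟪v₀, s⟫ + ⟪t₀, gs⟫ = 0) := by
    intro q₀
    have hGiClosed : IsClosed (Gi.graph : Set (H₀ × H₁)) := graph_closed_of_char Gi D hGi
    -- if q₀ ∈ BD(D) with D q₀ = s, then (s, q₀) ∈ G.graph, i.e. G s = q₀
    have hmain : ∀ s : H₀, (q₀, s) ∈ D.graph →
        (∀ v w, (v, w) ∈ Di.graph → ⟪v, q₀⟫ + ⟪w, s⟫ = 0) → (s, q₀) ∈ G.graph := by
      intro s hq₀s hs_orth
      apply mem_of_biorthogonal G.graph hGclosed
      intro w hw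
      dsimp only
      have hwDi : (w.2, w.1) ∈ Di.graph := by
        rw [hDi]
        intro u' p' hup'
        have h1 := hw (u', p') hup'
        have h2 := congrArg (starRingEnd ℂ) h1
        simp only [map_add, map_zero, inner_conj_symm] at h2
        linear_combination h2
      have h3 := hs_orth w.2 w.1 hwDi
      linear_combination h3
    constructor
    · rintro ⟨u₀, u, p, hup, hDap, hbdu₀, hui, hbdq₀, hqi⟩
      refine ⟨hbdq₀, ?_⟩
      intro v t hvt hker v₀ t₀ s' gs hbdv₀ hvmem hv₀t₀ hq₀s' hs'gs
      obtain ⟨s, hq₀s, hs_orth⟩ := hbdq₀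
      have hsq₀ : (s, q₀) ∈ G.graph := hmain s hq₀s hs_orth
      have hseq : s' = s := D.mem_graph_snd_inj hq₀s' hq₀s rfl
      have hgs : gs = q₀ := G.mem_graph_snd_inj (by rwa [hseq] at hs'gs) hsq₀ rfl
      rw [hseq, hgs]
      -- (v - v₀, t - t₀) ∈ Gi.graph
      have hsub : (v - v₀, t - t₀) ∈ G.graph := by
        have h := sub_mem hvt hv₀t₀
        have e : ((v, t) : H₀ × H₁) - (v₀, t₀) = (v - v₀, t - t₀) := rfl
        rwa [e] at h
      obtain ⟨ti, hti⟩ : ∃ ti, (v - v₀, ti) ∈ Gi.graph :=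
        ⟨Gi ⟨v - v₀, hvmem⟩, Gi.mem_graph ⟨v - v₀, hvmem⟩⟩
      have htieq : ti = t - t₀ := G.mem_graph_snd_inj (hGiG hti) hsub rfl
      rw [htieq] at hti
      have E3 : ⟪t - t₀, q₀⟫ = -⟪v - v₀, s⟫ := (hGi _ _).1 hti q₀ s hq₀s
      have E1 := (hDi _ _).1 hker u p hup
      rw [ContinuousLinearMap.adjoint_inner_left, ContinuousLinearMap.adjoint_inner_left] at E1
      -- Di part : (a p - q₀, m u - s) ∈ Di.graph
      obtain ⟨w2, hw2⟩ : ∃ w2, (a p - q₀, w2) ∈ Di.graph :=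
        ⟨Di ⟨a p - q₀, hqi⟩, Di.mem_graph ⟨a p - q₀, hqi⟩⟩
      have hsubD : (a p - q₀, m u - s) ∈ D.graph := by
        have h := sub_mem hDap hq₀s
        have e : ((a p, m u) : H₁ × H₀) - (q₀, s) = (a p - q₀, m u - s) := rfl
        rwa [e] at h
      have hw2eq : w2 = m u - s := D.mem_graph_snd_inj (hDiD hw2) hsubD rfl
      rw [hw2eq] at hw2
      have E2 : ⟪m u - s, v⟫ = -⟪a p - q₀, t⟫ := (hDi _ _).1 hw2 v t hvt
      have E2' : ⟪v, m u - s⟫ = -⟪t, a p - q₀⟫ := by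
        have h := congrArg (starRingEnd ℂ) E2
        simpa only [map_neg, inner_conj_symm] using h
      simp only [inner_sub_left, inner_sub_right] at E3 E2'
      linear_combination E1 - E2' - E3
    · rintro ⟨hbdq₀, hcond⟩
      obtain ⟨s, hq₀s, hs_orth⟩ := hbdq₀
      have hsq₀ : (s, q₀) ∈ G.graph := hmain s hq₀s hs_orth
      -- difference trick
      have hT1diff : ∀ z : H₀ × H₁, z ∈ G.graph →
          (∀ v t, (v, t) ∈ G.graph → ⟪v, z.1⟫ + ⟪t, z.2⟫ = 0) → z = 0 := by
        intro z hz h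
        have h2 := h z.1 z.2 (by simpa using hz)
        rw [inner_self_eq_norm_sq_to_K, inner_self_eq_norm_sq_to_K] at h2
        rw [← RCLike.ofReal_pow, ← RCLike.ofReal_pow, ← RCLike.ofReal_add,
          RCLike.ofReal_eq_zero] at h2
        have h4 : ‖z.1‖ ^ 2 + ‖z.2‖ ^ 2 = 0 := h2
        have h5 : z.1 = 0 := by
          have h6 : ‖z.1‖ ^ 2 = 0 := le_antisymm (by nlinarith [sq_nonneg ‖z.2‖]) (sq_nonneg _)
          have := pow_eq_zero_iff (by norm_num : (2:ℕ) ≠ 0) |>.1 h6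
          simpa using this
        have h7 : z.2 = 0 := by
          have h6 : ‖z.2‖ ^ 2 = 0 := le_antisymm (by nlinarith [sq_nonneg ‖z.1‖]) (sq_nonneg _)
          have := pow_eq_zero_iff (by norm_num : (2:ℕ) ≠ 0) |>.1 h6
          simpa using this
        exact Prod.ext_iff.2 ⟨by simpa using h5, by simpa using h7⟩
      have hform : ∀ u w v t, (u, w) ∈ G.graph → (v, t) ∈ G.graph →
          ⟪v, T1 u⟫ + ⟪t, T1G u⟫ = ⟪t, a w⟫ + ⟪v, m u⟫ :=
        fun u w v t h h' => (hT1form u w v t h h').symm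
      have hadd : ∀ u w u' w', (u, w) ∈ G.graph → (u', w') ∈ G.graph →
          T1 (u + u') = T1 u + T1 u' ∧ T1G (u + u') = T1G u + T1G u' := by
        intro u w u' w' h h'
        have hsum : (u + u', w + w') ∈ G.graph := by
          have hh := add_mem h h'
          have e : ((u, w) : H₀ × H₁) + (u', w') = (u + u', w + w') := rfl
          rwa [e] at hh
        have hz : ((T1 (u + u') - (T1 u + T1 u'), T1G (u + u') - (T1G u + T1G u')) : H₀ × H₁) = 0 := by
          apply hT1diff
          · have hh := sub_mem (hT1mem _ _ hsum) (add_mem (hT1mem _ _ h) (hT1mem _ _ h'))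
            have e : ((T1 (u + u'), T1G (u + u')) : H₀ × H₁) - ((T1 u, T1G u) + (T1 u', T1G u')) =
                (T1 (u + u') - (T1 u + T1 u'), T1G (u + u') - (T1G u + T1G u')) := rfl
            rwa [e] at hh
          · intro v t hvt
            have e1 := hform (u + u') (w + w') v t hsum hvt
            have e2 := hform u w v t h hvt
            have e3 := hform u' w' v t h' hvt
            dsimp only
            simp only [inner_add_right, inner_sub_right, map_add] at e1 e2 e3 ⊢
            linear_combination e1 - e2 - e3
        constructor
        · have := congrArg Prod.fst hz
          simpa [sub_eq_zero] using this
        · have := congrArg Prod.snd hz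
          simpa [sub_eq_zero] using this
      have hsmul : ∀ (c : ℂ) u w, (u, w) ∈ G.graph →
          T1 (c • u) = c • T1 u ∧ T1G (c • u) = c • T1G u := by
        intro c u w h
        have hc : (c • u, c • w) ∈ G.graph := by
          have hh := G.graph.smul_mem c h
          have e : (c • ((u, w) : H₀ × H₁)) = (c • u, c • w) := rfl
          rwa [e] at hh
        have hz : ((T1 (c • u) - c • T1 u, T1G (c • u) - c • T1G u) : H₀ × H₁) = 0 := by
          apply hT1diff
          · have hh := sub_mem (hT1mem _ _ hc) (G.graph.smul_mem c (hT1mem _ _ h))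
            have e : ((T1 (c • u), T1G (c • u)) : H₀ × H₁) - c • ((T1 u, T1G u) : H₀ × H₁) =
                (T1 (c • u) - c • T1 u, T1G (c • u) - c • T1G u) := rfl
            rwa [e] at hh
          · intro v t hvt
            have e1 := hform (c • u) (c • w) v t hc hvt
            have e2 := hform u w v t h hvt
            dsimp only
            simp only [inner_smul_right, inner_sub_right, map_smul] at e1 ⊢
            linear_combination e1 - c * e2
        constructor
        · have := congrArg Prod.fst hz
          simpa [sub_eq_zero] using this
        · have := congrArg Prod.snd hz
          simpa [sub_eq_zero] using this
      have hzero : T1 0 = 0 ∧ T1G 0 = 0 := by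
        have h00 : ((0, 0) : H₀ × H₁) ∈ G.graph := zero_mem _
        have hz : ((T1 0, T1G 0) : H₀ × H₁) = 0 := by
          apply hT1diff _ (hT1mem 0 0 h00)
          intro v t hvt
          have e := hform 0 0 v t h00 hvt
          dsimp only
          simp only [map_zero, inner_zero_right] at e ⊢
          linear_combination e
        exact ⟨congrArg Prod.fst hz, congrArg Prod.snd hz⟩
      -- the range submodule
      let R : Submodule ℂ (H₀ × H₁) :=
        { carrier := {z : H₀ × H₁ | ∃ u w, (u, w) ∈ G.graph ∧ z = (T1 u, T1G u)}
          add_mem' := by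
            rintro x y ⟨u, w, huw, rfl⟩ ⟨u', w', huw', rfl⟩
            refine ⟨u + u', w + w', ?_, ?_⟩
            · have hh := add_mem huw huw'
              have e : ((u, w) : H₀ × H₁) + (u', w') = (u + u', w + w') := rfl
              rwa [e] at hh
            · have h := hadd u w u' w' huw huw'
              rw [h.1, h.2]; rfl
          zero_mem' := ⟨0, 0, zero_mem _, by rw [hzero.1, hzero.2]; rfl⟩
          smul_mem' := by
            rintro c x ⟨u, w, huw, rfl⟩
            refine ⟨c • u, c • w, ?_, ?_⟩
            · have hh := G.graph.smul_mem c huw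
              have e : (c • ((u, w) : H₀ × H₁)) = (c • u, c • w) := rfl
              rwa [e] at hh
            · have h := hsmul c u w huw
              rw [h.1, h.2]; rfl }
      have hRclosed : IsClosed (R : Set (H₀ × H₁)) := hT1ran
      have hRsub : ∀ z ∈ R, z ∈ G.graph := by
        rintro z ⟨u, w, huw, rfl⟩
        exact hT1mem u w huw
      -- (s, q₀) ∈ R
      have hsR : (s, q₀) ∈ R := by
        apply mem_of_biorthogonal R hRclosed
        intro w hw
        dsimp only
        obtain ⟨y, hyG, hyorth⟩ := exists_proj G.graph hGclosed w
        have hperp : ⟪s, w.1 - y.1⟫ + ⟪q₀, w.2 - y.2⟫ = 0 := hyorth (s, q₀) hsq₀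
        have hyR : ∀ r ∈ R, ⟪r.1, y.1⟫ + ⟪r.2, y.2⟫ = 0 := by
          intro r hr
          have h1 := hw r hr
          have h2 := hyorth r (hRsub r hr)
          simp only [inner_sub_right] at h2
          linear_combination h1 - h2
        have hkery : ((ContinuousLinearMap.adjoint a) y.2, (ContinuousLinearMap.adjoint m) y.1)
            ∈ Di.graph := by
          rw [hDi]
          intro u' p' hup'
          have h1 : ⟪T1 u', y.1⟫ + ⟪T1G u', y.2⟫ = 0 := hyR (T1 u', T1G u') ⟨u', p', hup', rfl⟩
          have h1' := congrArg (starRingEnd ℂ) h1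
          simp only [map_add, map_zero, inner_conj_symm] at h1'
          have h2 := hform u' p' y.1 y.2 hup' (by simpa using hyG)
          rw [ContinuousLinearMap.adjoint_inner_left, ContinuousLinearMap.adjoint_inner_left]
          linear_combination h1' - h2
        obtain ⟨y₂, hy₂Gi, hy₂orth⟩ := exists_proj Gi.graph hGiClosed y
        have hv₀G : (y.1 - y₂.1, y.2 - y₂.2) ∈ G.graph := by
          have hh := sub_mem (show ((y.1, y.2) : H₀ × H₁) ∈ G.graph by simpa using hyG)
            (show ((y₂.1, y₂.2) : H₀ × H₁) ∈ G.graph by simpa using hGiG hy₂Gi)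
          have e : ((y.1, y.2) : H₀ × H₁) - (y₂.1, y₂.2) = (y.1 - y₂.1, y.2 - y₂.2) := rfl
          rwa [e] at hh
        have hbdv₀ : memBD G Gi (y.1 - y₂.1) := by
          refine ⟨y.2 - y₂.2, hv₀G, ?_⟩
          intro vv ww hvw
          exact hy₂orth (vv, ww) hvw
        have hvmem : y.1 - (y.1 - y₂.1) ∈ Gi.domain := by
          have := fst_mem_domain hy₂Gi
          simpa using this
        have hc := hcond y.1 y.2 (by simpa using hyG) hkery (y.1 - y₂.1) (y.2 - y₂.2) s q₀
          hbdv₀ hvmem hv₀G hq₀s hsq₀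
        have hGipart : ⟪y₂.2, q₀⟫ = -⟪y₂.1, s⟫ :=
          (hGi _ _).1 (by simpa using hy₂Gi) q₀ s hq₀s
        have hperp' := congrArg (starRingEnd ℂ) hperp
        simp only [map_add, map_zero, inner_conj_symm] at hperp'
        simp only [inner_sub_left] at hc hperp'
        linear_combination hperp' + hc + hGipart
      obtain ⟨u, w, huw, heq⟩ := hsR
      have hseq : s = T1 u := congrArg Prod.fst heq
      have hq₀eq : q₀ = T1G u := congrArg Prod.snd heq
      have hDir : (a w - q₀, m u - s) ∈ Di.graph := by
        rw [hDi]
        intro v t hvt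
        have e := hform u w v t huw hvt
        rw [← hseq, ← hq₀eq] at e
        have h1 : ⟪v, m u - s⟫ = -⟪t, a w - q₀⟫ := by
          simp only [inner_sub_right]
          linear_combination -e
        rw [← inner_conj_symm, h1, map_neg, inner_conj_symm]
      have hqi : a w - q₀ ∈ Di.domain := fst_mem_domain hDir
      have hawmu : (a w, m u) ∈ D.graph := by
        have hh := add_mem (hDiD hDir) hq₀s
        have e : ((a w - q₀, m u - s) : H₁ × H₀) + (q₀, s) = (a w - q₀ + q₀, m u - s + s) := rfl
        rw [e] at hh
        simpa using hh
      obtain ⟨y₃, hy₃Gi, hy₃orth⟩ := exists_proj Gi.graph hGiClosed (u, w)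
      refine ⟨u - y₃.1, u, w, huw, hawmu, ?_, ?_, ⟨s, hq₀s, hs_orth⟩, ?_⟩
      · refine ⟨w - y₃.2, ?_, ?_⟩
        · have hh := sub_mem huw (show ((y₃.1, y₃.2) : H₀ × H₁) ∈ G.graph by simpa using hGiG hy₃Gi)
          have e : ((u, w) : H₀ × H₁) - (y₃.1, y₃.2) = (u - y₃.1, w - y₃.2) := rfl
          rwa [e] at hh
        · intro vv ww hvw
          have := hy₃orth (vv, ww) hvw
          simpa using this
      · have := fst_mem_domain hy₃Gi
        simpa using this
      · exact hqi


end DtNPaper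
end
end
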